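/- arXiv:2311.15611 — 6 statements merged into one kernel-verified Lean document; each statement's English description precedes it below -/
import Mathlib

section
/- Let f = a_0 + a_1 z + ... + a_m z^m ∈ ℤ[z] be primitive with a_0 a_m ≠ 0 and m ≥ 2, and suppose |a_{m-1}| > |a_0||a_m|^{m-1} + |a_1||a_m|^{m-2} + ... + |a_{m-2}||a_m| + 1. Then f is irreducible in ℤ[z]. -/
open Polynomial Finset

noncomputable def Complex.abs : AbsoluteValue ℂ ℝ := IsAbsoluteValue.toAbsoluteValue (norm : ℂ → ℝ)

lemma Complex.abs_intCast (n : ℤ) : Complex.abs (n : ℂ) = |(n : ℝ)| := by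
  show ‖(n : ℂ)‖ = _
  exact Complex.norm_intCast n

lemma Complex.abs_natCast (n : ℕ) : Complex.abs (n : ℂ) = (n : ℝ) := by
  show ‖(n : ℂ)‖ = _
  exact Complex.norm_natCast n

private lemma nat_le_two_pow (r : ℕ) : (r + 1 : ℝ) ≤ 2 ^ r := by
  induction r with
  | zero => norm_num
  | succ n ih =>
    have h2 : (1:ℝ) ≤ 2 ^ n := one_le_pow₀ (by norm_num)
    rw [pow_succ]
    push_cast
    nlinarith

/-- Step 1: lower bound on big roots. -/
private lemma step1 (n : ℕ) (A : ℕ → ℂ) (am1 : ℂ) (S : ℝ)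
    (hS : ∑ i ∈ range (n+1), Complex.abs (A i) ≤ S)
    (hA : S + 2 ≤ Complex.abs am1)
    (w : ℂ) (hw : 1 ≤ Complex.abs w)
    (hroot : w^(n+2) + am1 * w^(n+1) + ∑ i ∈ range (n+1), A i * w^i = 0) :
    Complex.abs am1 - S/2 ≤ Complex.abs w := by
  set W := Complex.abs w with hW
  have hW0 : (0:ℝ) < W := lt_of_lt_of_le one_pos hw
  have hS0 : (0:ℝ) ≤ S := le_trans (Finset.sum_nonneg fun i _ => (Complex.abs.nonneg _)) hS
  have hWn : (0:ℝ) < W ^ n := pow_pos hW0 n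
  have hWn1 : (0:ℝ) < W ^ (n+1) := pow_pos hW0 _
  have hnle : W^n ≤ W^(n+1) := pow_le_pow_right₀ hw (Nat.le_succ n)
  -- main inequality |am1| * W^(n+1) ≤ W^(n+2) + S * W^n
  have key : Complex.abs am1 * W^(n+1) ≤ W^(n+2) + S * W^n := by
    have h1 : am1 * w^(n+1) = -(w^(n+2)) - ∑ i ∈ range (n+1), A i * w^i := by
      linear_combination hroot
    have h2 : Complex.abs (am1 * w^(n+1)) ≤ W^(n+2) + ∑ i ∈ range (n+1), Complex.abs (A i * w^i) := by
      rw [h1]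
      refine le_trans (Complex.abs.sub_le_add _ _) ?_
      gcongr
      · simp [hW]
      · exact Complex.abs.sum_le _ _
    have h3 : ∑ i ∈ range (n+1), Complex.abs (A i * w^i) ≤ S * W^n := by
      have hb : ∀ i ∈ range (n+1), Complex.abs (A i * w^i) ≤ Complex.abs (A i) * W^n := by
        intro i hi
        rw [map_mul, map_pow]
        have : W ^ i ≤ W ^ n := pow_le_pow_right₀ hw (by simpa using Nat.lt_succ_iff.mp (mem_range.mp hi))
        exact mul_le_mul_of_nonneg_left this (Complex.abs.nonneg _)
      calc ∑ i ∈ range (n+1), Complex.abs (A i * w^i)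
          ≤ ∑ i ∈ range (n+1), Complex.abs (A i) * W^n := Finset.sum_le_sum hb
        _ = (∑ i ∈ range (n+1), Complex.abs (A i)) * W^n := by rw [Finset.sum_mul]
        _ ≤ S * W^n := mul_le_mul_of_nonneg_right hS (le_of_lt hWn)
    calc Complex.abs am1 * W^(n+1) = Complex.abs (am1 * w^(n+1)) := by
          rw [map_mul, map_pow]
      _ ≤ W^(n+2) + ∑ i ∈ range (n+1), Complex.abs (A i * w^i) := h2
      _ ≤ W^(n+2) + S * W^n := by linarith [h3]
  have hp : W^(n+2) = W * W^(n+1) := by ring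
  have hq : W^(n+1) = W * W^n := by ring
  -- step A
  have hc1 : Complex.abs am1 ≤ W + S := by
    have h4 : Complex.abs am1 * W^(n+1) ≤ (W + S) * W^(n+1) := by
      have h5 : S * W^n ≤ S * W^(n+1) := mul_le_mul_of_nonneg_left hnle hS0
      calc Complex.abs am1 * W^(n+1) ≤ W^(n+2) + S * W^n := key
        _ ≤ W^(n+2) + S * W^(n+1) := by linarith
        _ = (W + S) * W^(n+1) := by ring
    exact le_of_mul_le_mul_right h4 hWn1
  have hA2 : 2 ≤ W := by linarith
  -- step B
  have hc2 : Complex.abs am1 ≤ W + S/2 := by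
    have h5 : 2*(S * W^n) ≤ S * W^(n+1) := by
      have h6 : (S*W^n)*2 ≤ (S*W^n)*W := mul_le_mul_of_nonneg_left hA2 (mul_nonneg hS0 hWn.le)
      calc 2*(S*W^n) = (S*W^n)*2 := by ring
        _ ≤ (S*W^n)*W := h6
        _ = S * (W*W^n) := by ring
        _ = S * W^(n+1) := by rw [← hq]
    have h4 : Complex.abs am1 * W^(n+1) ≤ (W + S/2) * W^(n+1) := by
      calc Complex.abs am1 * W^(n+1) ≤ W^(n+2) + S * W^n := key
        _ ≤ W^(n+2) + (S/2) * W^(n+1) := by linarith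
        _ = (W + S/2) * W^(n+1) := by ring
    exact le_of_mul_le_mul_right h4 hWn1
  linarith

private lemma rt_aux (s : ℕ) (t : ℝ) (ht : 2 ≤ t) : ((s:ℝ)+1) * t^2 ≤ t^(s+2) := by
  have ht0 : (0:ℝ) ≤ t := by linarith
  have h1 : (2:ℝ)^s ≤ t^s := pow_le_pow_left₀ (by norm_num) ht s
  have h2 : ((s:ℝ)+1) ≤ 2^s := nat_le_two_pow s
  have h3 : (0:ℝ) ≤ t^2 := sq_nonneg t
  calc ((s:ℝ)+1) * t^2 ≤ 2^s * t^2 := mul_le_mul_of_nonneg_right h2 h3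
    _ ≤ t^s * t^2 := mul_le_mul_of_nonneg_right h1 h3
    _ = t^(s+2) := by rw [← pow_add]

private lemma geom_identity (x y : ℂ) (s : ℕ) :
    (∑ k ∈ range (s+1), x^k * y^(s-k)) * (x - y) = x^(s+1) - y^(s+1) := by
  have h := geom_sum₂_mul x y (s+1)
  simpa using h

private lemma sigma_bound (x y t : ℝ) (s : ℕ) (ht2 : 2 ≤ t) (hx : t ≤ x) (hy : t ≤ y) :
    (∑ k ∈ range (s+1), x^k * y^(s - k)) * t^2 ≤ x^(s+1) * y^(s+1) := by
  have ht0 : (0:ℝ) ≤ t := by linarith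
  have hx0 : (0:ℝ) ≤ x := le_trans ht0 hx
  have hy0 : (0:ℝ) ≤ y := le_trans ht0 hy
  have hper : ∀ k ∈ range (s+1), x^k * y^(s-k) * t^(s+2) ≤ x^(s+1) * y^(s+1) := by
    intro k hk
    have hks : k ≤ s := Nat.lt_succ_iff.mp (mem_range.mp hk)
    have e1 : t^(s+2) = t^(s+1-k) * t^(k+1) := by rw [← pow_add]; congr 1; omega
    have b1 : x^k * t^(s+1-k) ≤ x^(s+1) := by
      calc x^k * t^(s+1-k) ≤ x^k * x^(s+1-k) :=
            mul_le_mul_of_nonneg_left (pow_le_pow_left₀ ht0 hx _) (pow_nonneg hx0 k)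
        _ = x^(s+1) := by rw [← pow_add]; congr 1; omega
    have b2 : y^(s-k) * t^(k+1) ≤ y^(s+1) := by
      calc y^(s-k) * t^(k+1) ≤ y^(s-k) * y^(k+1) :=
            mul_le_mul_of_nonneg_left (pow_le_pow_left₀ ht0 hy _) (pow_nonneg hy0 _)
        _ = y^(s+1) := by rw [← pow_add]; congr 1; omega
    calc x^k * y^(s-k) * t^(s+2) = (x^k * t^(s+1-k)) * (y^(s-k) * t^(k+1)) := by
          rw [e1]; ring
      _ ≤ x^(s+1) * y^(s+1) := by
          exact mul_le_mul b1 b2 (mul_nonneg (pow_nonneg hy0 _) (pow_nonneg ht0 _))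
            (pow_nonneg hx0 _)
  have hsum : (∑ k ∈ range (s+1), x^k * y^(s-k)) * t^(s+2) ≤ ((s:ℝ)+1) * (x^(s+1) * y^(s+1)) := by
    rw [Finset.sum_mul]
    calc ∑ k ∈ range (s+1), x^k * y^(s-k) * t^(s+2)
        ≤ ∑ _k ∈ range (s+1), x^(s+1) * y^(s+1) := Finset.sum_le_sum hper
      _ = ((s:ℝ)+1) * (x^(s+1) * y^(s+1)) := by
          rw [Finset.sum_const, card_range]; push_cast; ring
  have hsig0 : (0:ℝ) ≤ ∑ k ∈ range (s+1), x^k * y^(s-k) :=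
    Finset.sum_nonneg fun k _ => mul_nonneg (pow_nonneg hx0 _) (pow_nonneg hy0 _)
  have hmul : ((s:ℝ)+1) * ((∑ k ∈ range (s+1), x^k * y^(s-k)) * t^2)
      ≤ ((s:ℝ)+1) * (x^(s+1) * y^(s+1)) := by
    calc ((s:ℝ)+1) * ((∑ k ∈ range (s+1), x^k * y^(s-k)) * t^2)
        = (∑ k ∈ range (s+1), x^k * y^(s-k)) * (((s:ℝ)+1) * t^2) := by ring
      _ ≤ (∑ k ∈ range (s+1), x^k * y^(s-k)) * t^(s+2) :=
          mul_le_mul_of_nonneg_left (rt_aux s t ht2) hsig0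
      _ ≤ ((s:ℝ)+1) * (x^(s+1) * y^(s+1)) := hsum
  exact le_of_mul_le_mul_left hmul (by positivity)

/-- Uniqueness of big roots. -/
private lemma uniq (n : ℕ) (A : ℕ → ℂ) (am1 : ℂ) (S : ℝ)
    (hS : ∑ i ∈ range (n+1), Complex.abs (A i) ≤ S)
    (hA : S + 2 ≤ Complex.abs am1)
    (w₁ w₂ : ℂ) (hw₁ : 1 ≤ Complex.abs w₁) (hw₂ : 1 ≤ Complex.abs w₂)
    (h1 : w₁^(n+2) + am1 * w₁^(n+1) + ∑ i ∈ range (n+1), A i * w₁^i = 0)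
    (h2 : w₂^(n+2) + am1 * w₂^(n+1) + ∑ i ∈ range (n+1), A i * w₂^i = 0) :
    w₁ = w₂ := by
  by_contra hne
  have hS0 : (0:ℝ) ≤ S := le_trans (Finset.sum_nonneg fun i _ => (Complex.abs.nonneg _)) hS
  obtain ⟨t, hts⟩ : ∃ t : ℝ, t = Complex.abs am1 - S/2 := ⟨_, rfl⟩
  have ht : S/2 + 2 ≤ t := by rw [hts]; linarith
  have ht2 : (2:ℝ) ≤ t := by linarith
  have ht0 : (0:ℝ) ≤ t := by linarith
  have htS : S < t^2 := by nlinarith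
  have hW₁ : t ≤ Complex.abs w₁ := hts ▸ step1 n A am1 S hS hA w₁ hw₁ h1
  have hW₂ : t ≤ Complex.abs w₂ := hts ▸ step1 n A am1 S hS hA w₂ hw₂ h2
  set W₁ := Complex.abs w₁
  set W₂ := Complex.abs w₂
  have hW₁0 : (0:ℝ) ≤ W₁ := Complex.abs.nonneg _
  have hW₂0 : (0:ℝ) ≤ W₂ := Complex.abs.nonneg _
  -- the combination polynomial identity
  set E : ℕ → ℂ := fun i => A i * (w₁^i * w₂^i) * ∑ k ∈ range (n-i+1), w₁^k * w₂^(n-i-k)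
    with hE
  have per : ∀ i ∈ range (n+1),
      (w₁ - w₂) * E i = A i * w₂^i * w₁^(n+1) - A i * w₁^i * w₂^(n+1) := by
    intro i hi
    have hin : i ≤ n := Nat.lt_succ_iff.mp (mem_range.mp hi)
    have e1 : w₁^(n+1) = w₁^i * w₁^(n-i+1) := by rw [← pow_add]; congr 1; omega
    have e2 : w₂^(n+1) = w₂^i * w₂^(n-i+1) := by rw [← pow_add]; congr 1; omega
    simp only [hE]
    rw [e1, e2]
    generalize n - i = s
    have hgi := geom_identity w₁ w₂ s
    linear_combination (A i * (w₁^i * w₂^i)) * hgi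
  have hsum : (w₁ - w₂) * (∑ i ∈ range (n+1), E i)
      = (∑ i ∈ range (n+1), A i * w₂^i) * w₁^(n+1)
        - (∑ i ∈ range (n+1), A i * w₁^i) * w₂^(n+1) := by
    rw [mul_sum, sum_mul, sum_mul, ← Finset.sum_sub_distrib]
    exact Finset.sum_congr rfl per
  have main : (w₁ - w₂) * ((w₁*w₂)^(n+1) - ∑ i ∈ range (n+1), E i) = 0 := by
    linear_combination w₂^(n+1) * h1 - w₁^(n+1) * h2 - hsum
  have heq : (w₁*w₂)^(n+1) = ∑ i ∈ range (n+1), E i := by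
    rcases mul_eq_zero.mp main with h | h
    · exact absurd (sub_eq_zero.mp h) hne
    · exact sub_eq_zero.mp h
  -- absolute value estimates
  have habs : (W₁*W₂)^(n+1) ≤ ∑ i ∈ range (n+1), Complex.abs (E i) := by
    calc (W₁*W₂)^(n+1) = Complex.abs ((w₁*w₂)^(n+1)) := by rw [map_pow, map_mul]
      _ = Complex.abs (∑ i ∈ range (n+1), E i) := by rw [heq]
      _ ≤ ∑ i ∈ range (n+1), Complex.abs (E i) := Complex.abs.sum_le _ _
  have hper : ∀ i ∈ range (n+1),
      Complex.abs (E i) * t^2 ≤ Complex.abs (A i) * (W₁*W₂)^(n+1) := by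
    intro i hi
    have hin : i ≤ n := Nat.lt_succ_iff.mp (mem_range.mp hi)
    have habsE : Complex.abs (E i)
        ≤ Complex.abs (A i) * (W₁^i * W₂^i) * ∑ k ∈ range (n-i+1), W₁^k * W₂^(n-i-k) := by
      simp only [hE]
      rw [map_mul, map_mul, map_mul, map_pow, map_pow]
      have : Complex.abs (∑ k ∈ range (n-i+1), w₁^k * w₂^(n-i-k))
          ≤ ∑ k ∈ range (n-i+1), W₁^k * W₂^(n-i-k) := by
        refine le_trans (Complex.abs.sum_le _ _) ?_
        refine le_of_eq (Finset.sum_congr rfl fun k _ => ?_)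
        rw [map_mul, map_pow, map_pow]
      exact mul_le_mul_of_nonneg_left this (by positivity)
    have hsig := sigma_bound W₁ W₂ t (n-i) ht2 hW₁ hW₂
    have hcomb : (W₁^i * W₂^i) * ((∑ k ∈ range (n-i+1), W₁^k * W₂^(n-i-k)) * t^2)
        ≤ (W₁*W₂)^(n+1) := by
      calc (W₁^i * W₂^i) * ((∑ k ∈ range (n-i+1), W₁^k * W₂^(n-i-k)) * t^2)
          ≤ (W₁^i * W₂^i) * (W₁^(n-i+1) * W₂^(n-i+1)) :=
            mul_le_mul_of_nonneg_left hsig (by positivity)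
        _ = (W₁*W₂)^(n+1) := by
            have p1 : W₁^i * W₁^(n-i+1) = W₁^(n+1) := by rw [← pow_add]; congr 1; omega
            have p2 : W₂^i * W₂^(n-i+1) = W₂^(n+1) := by rw [← pow_add]; congr 1; omega
            calc (W₁^i * W₂^i) * (W₁^(n-i+1) * W₂^(n-i+1))
                = (W₁^i * W₁^(n-i+1)) * (W₂^i * W₂^(n-i+1)) := by ring
              _ = W₁^(n+1) * W₂^(n+1) := by rw [p1, p2]
              _ = (W₁*W₂)^(n+1) := (mul_pow _ _ _).symm
    calc Complex.abs (E i) * t^2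
        ≤ (Complex.abs (A i) * (W₁^i * W₂^i) * ∑ k ∈ range (n-i+1), W₁^k * W₂^(n-i-k)) * t^2 :=
          mul_le_mul_of_nonneg_right habsE (sq_nonneg t)
      _ = Complex.abs (A i) * ((W₁^i * W₂^i) * ((∑ k ∈ range (n-i+1), W₁^k * W₂^(n-i-k)) * t^2)) := by
          ring
      _ ≤ Complex.abs (A i) * (W₁*W₂)^(n+1) :=
          mul_le_mul_of_nonneg_left hcomb (Complex.abs.nonneg _)
  have hT0 : (0:ℝ) < (W₁*W₂)^(n+1) := by positivity
  have hfinal : (∑ i ∈ range (n+1), Complex.abs (E i)) * t^2 ≤ S * (W₁*W₂)^(n+1) := by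
    rw [Finset.sum_mul]
    calc ∑ i ∈ range (n+1), Complex.abs (E i) * t^2
        ≤ ∑ i ∈ range (n+1), Complex.abs (A i) * (W₁*W₂)^(n+1) := Finset.sum_le_sum hper
      _ = (∑ i ∈ range (n+1), Complex.abs (A i)) * (W₁*W₂)^(n+1) := by rw [Finset.sum_mul]
      _ ≤ S * (W₁*W₂)^(n+1) := mul_le_mul_of_nonneg_right hS hT0.le
  nlinarith [mul_le_mul_of_nonneg_right habs (sq_nonneg t)]

/-- A big root cannot also satisfy the derivative equation. -/
private lemma noDouble (n : ℕ) (A : ℕ → ℂ) (am1 : ℂ) (S : ℝ)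
    (hS : ∑ i ∈ range (n+1), Complex.abs (A i) ≤ S)
    (hA : S + 2 ≤ Complex.abs am1)
    (w : ℂ) (hw : 1 ≤ Complex.abs w)
    (h1 : w^(n+2) + am1 * w^(n+1) + ∑ i ∈ range (n+1), A i * w^i = 0)
    (h2 : (n+2:ℂ) * w^(n+2) + (n+1:ℂ) * (am1 * w^(n+1))
          + ∑ i ∈ range (n+1), (i:ℂ) * (A i * w^i) = 0) : False := by
  have hS0 : (0:ℝ) ≤ S := le_trans (Finset.sum_nonneg fun i _ => (Complex.abs.nonneg _)) hS
  obtain ⟨t, hts⟩ : ∃ t : ℝ, t = Complex.abs am1 - S/2 := ⟨_, rfl⟩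
  have ht : S/2 + 2 ≤ t := by rw [hts]; linarith
  have ht2 : (2:ℝ) ≤ t := by linarith
  have ht0 : (0:ℝ) ≤ t := by linarith
  have htS : S < t^2 := by nlinarith
  have hW : t ≤ Complex.abs w := hts ▸ step1 n A am1 S hS hA w hw h1
  set W := Complex.abs w
  have hW0 : (0:ℝ) ≤ W := Complex.abs.nonneg _
  -- derive w^(n+2) = ∑ ((n+1-i) : ℂ) * (A i * w^i)
  have hsplit : ∑ i ∈ range (n+1), ((n+1-i : ℕ):ℂ) * (A i * w^i)
      = (n+1:ℂ) * (∑ i ∈ range (n+1), A i * w^i) - ∑ i ∈ range (n+1), (i:ℂ) * (A i * w^i) := by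
    rw [mul_sum, ← Finset.sum_sub_distrib]
    refine Finset.sum_congr rfl fun i hi => ?_
    have hin : i ≤ n + 1 := le_of_lt (mem_range.mp hi)
    have : ((n+1-i : ℕ):ℂ) = (n+1:ℂ) - (i:ℂ) := by
      rw [Nat.cast_sub hin]; push_cast; ring
    rw [this]; ring
  have key : w^(n+2) = ∑ i ∈ range (n+1), ((n+1-i : ℕ):ℂ) * (A i * w^i) := by
    rw [hsplit]
    linear_combination h2 - (n+1:ℂ) * h1
  -- absolute values
  have habs : W^(n+2) ≤ ∑ i ∈ range (n+1), ((n+1-i:ℕ):ℝ) * (Complex.abs (A i) * W^i) := by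
    calc W^(n+2) = Complex.abs (w^(n+2)) := by rw [map_pow]
      _ ≤ ∑ i ∈ range (n+1), Complex.abs (((n+1-i : ℕ):ℂ) * (A i * w^i)) := by
          rw [key]; exact Complex.abs.sum_le _ _
      _ = ∑ i ∈ range (n+1), ((n+1-i:ℕ):ℝ) * (Complex.abs (A i) * W^i) := by
          refine Finset.sum_congr rfl fun i hi => ?_
          rw [map_mul, map_mul, map_pow, Complex.abs_natCast]
  have hper : ∀ i ∈ range (n+1),
      ((n+1-i:ℕ):ℝ) * (Complex.abs (A i) * W^i) * t^2 ≤ Complex.abs (A i) * W^(n+2) := by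
    intro i hi
    have hin : i ≤ n := Nat.lt_succ_iff.mp (mem_range.mp hi)
    have hcast : ((n+1-i:ℕ):ℝ) = ((n-i:ℕ):ℝ) + 1 := by
      push_cast [Nat.cast_sub (by omega : i ≤ n + 1), Nat.cast_sub hin]; ring
    have hrt := rt_aux (n-i) t ht2
    have hWp : t^(n-i+2) ≤ W^(n-i+2) := pow_le_pow_left₀ ht0 hW _
    have hsplit2 : W^i * W^(n-i+2) = W^(n+2) := by rw [← pow_add]; congr 1; omega
    calc ((n+1-i:ℕ):ℝ) * (Complex.abs (A i) * W^i) * t^2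
        = Complex.abs (A i) * (W^i * ((((n-i:ℕ):ℝ) + 1) * t^2)) := by rw [hcast]; ring
      _ ≤ Complex.abs (A i) * (W^i * W^(n-i+2)) := by
          refine mul_le_mul_of_nonneg_left ?_ (Complex.abs.nonneg _)
          exact mul_le_mul_of_nonneg_left (le_trans hrt hWp) (pow_nonneg hW0 _)
      _ = Complex.abs (A i) * W^(n+2) := by rw [hsplit2]
  have hT0 : (0:ℝ) < W^(n+2) := by positivity
  have hfinal : (∑ i ∈ range (n+1), ((n+1-i:ℕ):ℝ) * (Complex.abs (A i) * W^i)) * t^2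
      ≤ S * W^(n+2) := by
    rw [Finset.sum_mul]
    calc ∑ i ∈ range (n+1), ((n+1-i:ℕ):ℝ) * (Complex.abs (A i) * W^i) * t^2
        ≤ ∑ i ∈ range (n+1), Complex.abs (A i) * W^(n+2) := Finset.sum_le_sum hper
      _ = (∑ i ∈ range (n+1), Complex.abs (A i)) * W^(n+2) := by rw [Finset.sum_mul]
      _ ≤ S * W^(n+2) := mul_le_mul_of_nonneg_right hS hT0.le
  nlinarith [mul_le_mul_of_nonneg_right habs (sq_nonneg t)]

private lemma abs_multiset_prod (s : Multiset ℂ) :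
    Complex.abs s.prod = (s.map Complex.abs).prod := by
  induction s using Multiset.induction with
  | empty => simp
  | cons a s ih => simp [map_mul, ih]

private lemma msprod_lt_one (s : Multiset ℝ) (hne : s ≠ 0) (h : ∀ x ∈ s, 0 ≤ x ∧ x < 1) :
    s.prod < 1 := by
  induction s using Multiset.induction with
  | empty => exact absurd rfl hne
  | cons a s ih =>
    obtain ⟨ha0, ha1⟩ := h a (Multiset.mem_cons_self a s)
    rw [Multiset.prod_cons]
    by_cases hs : s = (0 : Multiset ℝ)
    · subst hs; simpa using ha1
    · have hp : s.prod < 1 := ih hs (fun x hx => h x (Multiset.mem_cons_of_mem hx))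
      have hpn : 0 ≤ s.prod :=
        Multiset.prod_nonneg (fun x hx => (h x (Multiset.mem_cons_of_mem hx)).1)
      nlinarith

private lemma exists_big_root (q : ℤ[X]) (hq1 : 1 ≤ q.natDegree) (c : ℂ)
    (hc : 1 ≤ Complex.abs c)
    (hlc : Complex.abs ((q.leadingCoeff : ℤ) : ℂ) ≤ Complex.abs c)
    (h0 : (1:ℝ) ≤ Complex.abs ((q.coeff 0 : ℤ) : ℂ)) :
    ∃ z : ℂ, (q.map (Int.castRingHom ℂ)).IsRoot z ∧ 1 ≤ Complex.abs (c * z) := by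
  by_contra hcon
  push_neg at hcon
  set Q := q.map (Int.castRingHom ℂ) with hQ
  have hq0 : q ≠ 0 := fun h => by simp [h] at hq1
  have hinj : Function.Injective ⇑(Int.castRingHom ℂ) := fun a b hab => by simpa using hab
  have hQ0 : Q ≠ 0 := by
    rw [hQ, Ne, Polynomial.map_eq_zero_iff hinj]
    exact hq0
  have hroots : ∀ z ∈ Q.roots, Complex.abs (c * z) < 1 := by
    intro z hz
    exact hcon z (isRoot_of_mem_roots hz)
  have hsplits : Q.Splits := IsAlgClosed.splits Q
  have hcard : Multiset.card Q.roots = q.natDegree := by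
    rw [Polynomial.splits_iff_card_roots.mp hsplits, hQ,
      natDegree_map_eq_of_injective hinj]
  -- ∣Q(0)∣ = |lc| * prod of |roots|
  have hfact := hsplits.eq_prod_roots
  have heval0 : Complex.abs (Q.eval 0)
      = Complex.abs Q.leadingCoeff * (Q.roots.map Complex.abs).prod := by
    conv_lhs => rw [hfact]
    rw [Polynomial.eval_mul, Polynomial.eval_C, map_mul, Polynomial.eval_multiset_prod]
    congr 1
    have hmm : Multiset.map (eval 0) (Multiset.map (fun a => X - C a) Q.roots)
        = Q.roots.map (fun a => -a) := by
      rw [Multiset.map_map]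
      apply Multiset.map_congr rfl
      intro x _
      simp
    rw [hmm, abs_multiset_prod, Multiset.map_map]
    apply congrArg
    apply Multiset.map_congr rfl
    intro x _
    simp
  -- the contradiction chain
  have hQlc : Q.leadingCoeff = ((q.leadingCoeff : ℤ) : ℂ) := by
    rw [hQ, Polynomial.leadingCoeff_map_of_leadingCoeff_ne_zero]
    · rfl
    · simp [Polynomial.leadingCoeff_ne_zero.mpr hq0]
  have hQ0eval : Q.eval 0 = ((q.coeff 0 : ℤ) : ℂ) := by
    rw [← Polynomial.coeff_zero_eq_eval_zero, hQ, Polynomial.coeff_map]; rfl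
  set P := (Q.roots.map (fun r => Complex.abs (c * r))).prod with hP
  have hPlt : P < 1 := by
    apply msprod_lt_one
    · intro hcontr
      have : Multiset.card (Q.roots.map (fun r => Complex.abs (c * r))) = 0 := by
        rw [hcontr]; rfl
      rw [Multiset.card_map, hcard] at this
      omega
    · intro x hx
      obtain ⟨r, hr, rfl⟩ := Multiset.mem_map.mp hx
      exact ⟨Complex.abs.nonneg _, hroots r hr⟩
  have hPsplit : P = Complex.abs c ^ q.natDegree * (Q.roots.map Complex.abs).prod := by
    rw [hP]
    have : (fun r => Complex.abs (c * r)) = fun r =>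
        (Function.const ℂ (Complex.abs c)) r * Complex.abs r := by
      ext r; simp [map_mul]
    rw [this, Multiset.prod_map_mul, Multiset.map_const, Multiset.prod_replicate, hcard]
  have hck : (0:ℝ) < Complex.abs c ^ q.natDegree := by positivity
  have hprodn : 0 ≤ (Q.roots.map Complex.abs).prod :=
    Multiset.prod_nonneg (by
      intro x hx
      obtain ⟨r, _, rfl⟩ := Multiset.mem_map.mp hx
      exact Complex.abs.nonneg _)
  have hlcpos : 0 < Complex.abs Q.leadingCoeff := by
    rw [Complex.abs.pos_iff]
    exact Polynomial.leadingCoeff_ne_zero.mpr hQ0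
  have chain1 : Complex.abs c ^ q.natDegree ≤ Complex.abs c ^ q.natDegree * Complex.abs (Q.eval 0) := by
    nlinarith [hQ0eval ▸ h0]
  have chain2 : Complex.abs c ^ q.natDegree * Complex.abs (Q.eval 0)
      = Complex.abs Q.leadingCoeff * P := by
    rw [heval0, hPsplit]; ring
  have chain3 : Complex.abs Q.leadingCoeff * P < Complex.abs Q.leadingCoeff :=  by
    nlinarith
  have chain4 : Complex.abs Q.leadingCoeff ≤ Complex.abs c ^ q.natDegree := by
    rw [hQlc]
    calc Complex.abs ((q.leadingCoeff : ℤ) : ℂ) ≤ Complex.abs c := hlc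
      _ ≤ Complex.abs c ^ q.natDegree := le_self_pow₀ hc (by omega)
  linarith

/-- The non-monic Perron criterion, as the case `j = m - 1`, `b = 1`, `δ = 1` of Theorem 4. -/
theorem stmt9 (m : ℕ) (hm : 2 ≤ m) (a : ℕ → ℤ) (f : ℤ[X])
    (hf : f = ∑ i ∈ range (m + 1), C (a i) * X ^ i)
    (ha : a 0 * a m ≠ 0) (hprim : f.IsPrimitive)
    (hineq : |a (m - 1)| > (∑ i ∈ range (m - 1), |a i| * |a m| ^ (m - 1 - i)) + 1) :
    Irreducible f := by
  obtain ⟨n, rfl⟩ : ∃ n, m = n + 2 := ⟨m - 2, by omega⟩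
  have hsub : n + 2 - 1 = n + 1 := rfl
  rw [hsub] at hineq
  have ha0 : a 0 ≠ 0 := left_ne_zero_of_mul ha
  have ham : a (n+2) ≠ 0 := right_ne_zero_of_mul ha
  -- coefficients of f
  have hck : ∀ k, k ≤ n + 2 → f.coeff k = a k := by
    intro k hk
    rw [hf, finset_sum_coeff, Finset.sum_eq_single k]
    · rw [coeff_C_mul, coeff_X_pow, if_pos rfl, mul_one]
    · intro b _ hbk
      rw [coeff_C_mul, coeff_X_pow, if_neg (fun hh => hbk hh.symm), mul_zero]
    · intro hk2
      exact absurd (mem_range.mpr (by omega)) hk2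
  have hfne : f ≠ 0 := fun h => ham (by rw [← hck (n+2) le_rfl, h, coeff_zero])
  have hdeg : f.natDegree = n + 2 := by
    apply le_antisymm
    · rw [hf]
      apply natDegree_sum_le_of_forall_le
      intro i hi
      exact le_trans (natDegree_C_mul_X_pow_le _ _)
        (by simpa [Nat.lt_succ_iff] using mem_range.mp hi)
    · exact le_natDegree_of_ne_zero (by rw [hck (n+2) le_rfl]; exact ham)
  have hlc : f.leadingCoeff = a (n+2) := by rw [leadingCoeff, hdeg, hck (n+2) le_rfl]
  constructor
  · intro hu
    have := natDegree_eq_zero_of_isUnit hu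
    omega
  intro g h hgh
  by_contra hcon
  push_neg at hcon
  obtain ⟨hgu, hhu⟩ := hcon
  have hg0 : g ≠ 0 := fun h0 => hfne (by rw [hgh, h0, zero_mul])
  have hh0 : h ≠ 0 := fun h0 => hfne (by rw [hgh, h0, mul_zero])
  have hgd : 1 ≤ g.natDegree := by
    rcases Nat.eq_zero_or_pos g.natDegree with h0 | h0
    · exfalso
      apply hgu
      have hgc : g = C (g.coeff 0) := eq_C_of_natDegree_eq_zero h0
      have : IsUnit (g.coeff 0) := hprim _ (by rw [← hgc]; exact ⟨h, hgh⟩)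
      rw [hgc]; exact isUnit_C.mpr this
    · exact h0
  have hhd : 1 ≤ h.natDegree := by
    rcases Nat.eq_zero_or_pos h.natDegree with h0 | h0
    · exfalso
      apply hhu
      have hhc : h = C (h.coeff 0) := eq_C_of_natDegree_eq_zero h0
      have : IsUnit (h.coeff 0) := hprim _ (by rw [← hhc]; exact ⟨g, by rw [hgh]; ring⟩)
      rw [hhc]; exact isUnit_C.mpr this
    · exact h0
  have hlcg0 : g.leadingCoeff ≠ 0 := leadingCoeff_ne_zero.mpr hg0
  have hlch0 : h.leadingCoeff ≠ 0 := leadingCoeff_ne_zero.mpr hh0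
  have hlcm : g.leadingCoeff * h.leadingCoeff = a (n+2) := by
    rw [← hlc, hgh, leadingCoeff_mul]
  have hc0 : g.coeff 0 * h.coeff 0 = a 0 := by
    rw [← hck 0 (by omega), hgh, mul_coeff_zero]
  have hgc0 : g.coeff 0 ≠ 0 := fun h0 => ha0 (by rw [← hc0, h0, zero_mul])
  have hhc0 : h.coeff 0 ≠ 0 := fun h0 => ha0 (by rw [← hc0, h0, mul_zero])
  -- complex setup
  set c : ℂ := ((a (n+2) : ℤ) : ℂ) with hcdef
  have hcabs : Complex.abs c = ((|a (n+2)| : ℤ) : ℝ) := by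
    rw [hcdef, Complex.abs_intCast, Int.cast_abs]
  have hc1 : 1 ≤ Complex.abs c := by
    rw [hcabs]
    exact_mod_cast Int.one_le_abs ham
  have hcne : c ≠ 0 := by
    rw [hcdef]
    exact_mod_cast ham
  -- leading coeff bounds
  have habs_int : ∀ u v : ℤ, u ≠ 0 → v ≠ 0 → u * v = a (n+2) →
      Complex.abs ((u : ℤ) : ℂ) ≤ Complex.abs c := by
    intro u v hu hv huv
    rw [hcabs, Complex.abs_intCast]
    have h1 : |u| ≤ |a (n+2)| := by
      rw [← huv, abs_mul]
      exact le_mul_of_one_le_right (abs_nonneg u) (Int.one_le_abs hv)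
    calc |((u : ℤ) : ℝ)| = ((|u| : ℤ) : ℝ) := by rw [Int.cast_abs]
      _ ≤ ((|a (n+2)| : ℤ) : ℝ) := by exact_mod_cast h1
  have hbig_g := exists_big_root g hgd c hc1
    (habs_int _ _ hlcg0 hlch0 hlcm)
    (by rw [Complex.abs_intCast]; exact_mod_cast Int.one_le_abs hgc0)
  have hbig_h := exists_big_root h hhd c hc1
    (habs_int _ _ hlch0 hlcg0 (by rw [← hlcm]; ring))
    (by rw [Complex.abs_intCast]; exact_mod_cast Int.one_le_abs hhc0)
  obtain ⟨zg, hzgroot, hzgbig⟩ := hbig_g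
  obtain ⟨zh, hzhroot, hzhbig⟩ := hbig_h
  -- scalar data
  set A : ℕ → ℂ := fun i => (a i : ℂ) * c^(n+1-i) with hAdef
  set S : ℝ := ((∑ i ∈ range (n+1), |a i| * |a (n+2)| ^ (n+1-i) : ℤ) : ℝ) with hSdef
  have hS : ∑ i ∈ range (n+1), Complex.abs (A i) ≤ S := by
    apply le_of_eq
    rw [hSdef]
    push_cast [Int.cast_abs]
    refine Finset.sum_congr rfl fun i _ => ?_
    rw [hAdef]
    simp only [map_mul, map_pow, Complex.abs_intCast, hcdef, Int.cast_abs]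
  have hA : S + 2 ≤ Complex.abs ((a (n+1) : ℤ) : ℂ) := by
    rw [Complex.abs_intCast, ← Int.cast_abs]
    have : (∑ i ∈ range (n+1), |a i| * |a (n+2)| ^ (n+1-i)) + 2 ≤ |a (n+1)| := by omega
    rw [hSdef]
    exact_mod_cast this
  -- the map of f and its evaluation
  have hfc : f.map (Int.castRingHom ℂ) = (g.map (Int.castRingHom ℂ)) * (h.map (Int.castRingHom ℂ)) := by
    rw [hgh, Polynomial.map_mul]
  have hevalf : ∀ z : ℂ, (f.map (Int.castRingHom ℂ)).eval z
      = ∑ i ∈ range (n+2+1), (a i : ℂ) * z^i := by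
    intro z
    rw [hf, Polynomial.map_sum, eval_finset_sum]
    refine Finset.sum_congr rfl fun i _ => ?_
    rw [Polynomial.map_mul, Polynomial.map_C, Polynomial.map_pow, Polynomial.map_X,
      eval_mul, eval_C, eval_pow, eval_X]
    rfl
  -- scalar P-equation
  have hPeq : ∀ z : ℂ, (f.map (Int.castRingHom ℂ)).eval z = 0 →
      (c*z)^(n+2) + ((a (n+1) : ℤ) : ℂ) * (c*z)^(n+1)
        + ∑ i ∈ range (n+1), A i * (c*z)^i = 0 := by
    intro z hz
    rw [hevalf z] at hz
    have h1 : ∑ i ∈ range (n+2+1), ((a i : ℂ) * z^i) * c^(n+1) = 0 := by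
      rw [← Finset.sum_mul, hz, zero_mul]
    rw [Finset.sum_range_succ, Finset.sum_range_succ] at h1
    have e2 : ((a (n+2) : ℂ) * z^(n+2)) * c^(n+1) = (c*z)^(n+2) := by
      rw [← hcdef]; ring
    have e1 : ((a (n+1) : ℂ) * z^(n+1)) * c^(n+1) = ((a (n+1) : ℂ)) * (c*z)^(n+1) := by ring
    have esum : ∑ i ∈ range (n+1), ((a i : ℂ) * z^i) * c^(n+1)
        = ∑ i ∈ range (n+1), A i * (c*z)^i := by
      refine Finset.sum_congr rfl fun i hi => ?_
      have hin : i ≤ n := Nat.lt_succ_iff.mp (mem_range.mp hi)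
      have hpow : c^(n+1) = c^(n+1-i) * c^i := by rw [← pow_add]; congr 1; omega
      rw [hAdef, hpow]
      ring
    rw [esum, e1, e2] at h1
    linear_combination h1
  -- scalar derivative equation
  have hDeq : ∀ z : ℂ, (f.map (Int.castRingHom ℂ)).derivative.eval z = 0 →
      ((n:ℂ)+2) * (c*z)^(n+2) + ((n:ℂ)+1) * (((a (n+1) : ℤ) : ℂ) * (c*z)^(n+1))
        + ∑ i ∈ range (n+1), (i:ℂ) * (A i * (c*z)^i) = 0 := by
    intro z hz
    have hder : (f.map (Int.castRingHom ℂ)).derivative.eval z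
        = ∑ i ∈ range (n+2+1), ((a i : ℂ) * (i:ℂ)) * z^(i-1) := by
      rw [hf, Polynomial.map_sum, derivative_sum, eval_finset_sum]
      refine Finset.sum_congr rfl fun i _ => ?_
      rw [Polynomial.map_mul, Polynomial.map_C, Polynomial.map_pow, Polynomial.map_X,
        derivative_C_mul_X_pow, eval_mul, eval_C, eval_pow, eval_X]
      rfl
    rw [hder] at hz
    have h1 : ∑ i ∈ range (n+2+1), (((a i : ℂ) * (i:ℂ)) * z^(i-1)) * (z * c^(n+1)) = 0 := by
      rw [← Finset.sum_mul, hz, zero_mul]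
    have hstep : ∀ i ∈ range (n+2+1), (((a i : ℂ) * (i:ℂ)) * z^(i-1)) * (z * c^(n+1))
        = (i:ℂ) * (((a i : ℂ) * z^i) * c^(n+1)) := by
      intro i _
      cases i with
      | zero => simp
      | succ j =>
        have : (j+1) - 1 = j := rfl
        rw [this, pow_succ]
        push_cast
        ring
    rw [Finset.sum_congr rfl hstep] at h1
    rw [Finset.sum_range_succ, Finset.sum_range_succ] at h1
    have e2 : ((n+2:ℕ):ℂ) * (((a (n+2) : ℂ) * z^(n+2)) * c^(n+1)) = ((n:ℂ)+2) * (c*z)^(n+2) := by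
      rw [← hcdef]; push_cast; ring
    have e1 : ((n+1:ℕ):ℂ) * (((a (n+1) : ℂ) * z^(n+1)) * c^(n+1))
        = ((n:ℂ)+1) * (((a (n+1) : ℂ)) * (c*z)^(n+1)) := by push_cast; ring
    have esum : ∑ i ∈ range (n+1), (i:ℂ) * (((a i : ℂ) * z^i) * c^(n+1))
        = ∑ i ∈ range (n+1), (i:ℂ) * (A i * (c*z)^i) := by
      refine Finset.sum_congr rfl fun i hi => ?_
      have hin : i ≤ n := Nat.lt_succ_iff.mp (mem_range.mp hi)
      have hpow : c^(n+1) = c^(n+1-i) * c^i := by rw [← pow_add]; congr 1; omega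
      rw [hAdef, hpow]
      ring
    rw [esum, e1, e2] at h1
    linear_combination h1
  -- assemble
  have hzg0 : (f.map (Int.castRingHom ℂ)).eval zg = 0 := by
    rw [hfc, eval_mul, hzgroot, zero_mul]
  have hzh0 : (f.map (Int.castRingHom ℂ)).eval zh = 0 := by
    rw [hfc, eval_mul, hzhroot, mul_zero]
  have hPg := hPeq zg hzg0
  have hPh := hPeq zh hzh0
  have huniq := uniq n A ((a (n+1) : ℤ) : ℂ) S hS hA (c*zg) (c*zh) hzgbig hzhbig hPg hPh
  have hzz : zg = zh := mul_left_cancel₀ hcne huniq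
  have hderiv0 : (f.map (Int.castRingHom ℂ)).derivative.eval zg = 0 := by
    rw [hfc, derivative_mul, eval_add, eval_mul, eval_mul, hzgroot]
    rw [hzz, hzhroot]
    ring
  exact noDouble n A ((a (n+1) : ℤ) : ℂ) S hS hA (c*zg) hzgbig hPg (hDeq zg hderiv0)
end

section
/- Let f = a_0 + a_1 z + ... + a_m z^m ∈ ℤ[z] be primitive with a_0 a_m ≠ 0 and m ≥ 2, and suppose there is an index j with 0 ≤ j ≤ m−1 such that |a_j| > |a_{j+1}/a_m| + Σ_{0 ≤ i < j} |a_i||a_m|^{j−i} + Σ_{j+1 < i ≤ m} |a_i||a_m|^{−(i−j)}. Then f is a product of at most m−j irreducible polynomials in ℤ[z]. -/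
open Polynomial Finset

section Helpers

open Metric Complex
open scoped Real

noncomputable section

lemma myIntegralAdd {f g : ℂ → ℂ} {c : ℂ} {R : ℝ} (hf : CircleIntegrable f c R)
    (hg : CircleIntegrable g c R) :
    (∮ z in C(c, R), (f z + g z)) = (∮ z in C(c, R), f z) + ∮ z in C(c, R), g z := by
  simp only [circleIntegral, smul_add]
  exact intervalIntegral.integral_add hf.out hg.out

lemma circleIntegrable_inv_sub {R : ℝ} (hR : 0 ≤ R) {r : ℂ} (hr : ‖r‖ ≠ R) :
    CircleIntegrable (fun z => (z - r)⁻¹) 0 R := by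
  apply ContinuousOn.circleIntegrable hR
  apply ContinuousOn.inv₀ (by fun_prop)
  intro z hz
  rw [mem_sphere_zero_iff_norm] at hz
  intro h
  rw [sub_eq_zero] at h
  exact hr (by rw [← h]; exact hz)

lemma integral_inv_sub_of_gt {R : ℝ} (hR : 0 ≤ R) {r : ℂ} (hr : R < ‖r‖) :
    (∮ z in C(0, R), (z - r)⁻¹) = 0 := by
  have key : ∀ z ∈ closedBall (0:ℂ) R, z - r ≠ 0 := by
    intro z hz h
    rw [sub_eq_zero] at h
    subst h
    rw [mem_closedBall_zero_iff] at hz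
    exact absurd hz (not_le.2 hr)
  apply circleIntegral_eq_zero_of_differentiable_on_off_countable hR Set.countable_empty
  · exact ContinuousOn.inv₀ (by fun_prop) key
  · intro z hz
    exact ((differentiable_id.sub_const r).differentiableAt).inv
      (key z (ball_subset_closedBall hz.1))

lemma circleIntegrable_sum_inv {R : ℝ} (hR : 0 ≤ R) (s : Multiset ℂ)
    (h : ∀ r ∈ s, ‖r‖ ≠ R) :
    CircleIntegrable (fun z => (s.map (fun r => (z - r)⁻¹)).sum) 0 R := by
  induction s using Multiset.induction with
  | empty => simp [CircleIntegrable]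
  | cons a t ih =>
    simp only [Multiset.map_cons, Multiset.sum_cons]
    exact (circleIntegrable_inv_sub hR (h a (Multiset.mem_cons_self a t))).add
      (ih fun r hr => h r (Multiset.mem_cons_of_mem hr))

lemma integral_sum_inv {R : ℝ} (hR : 0 < R) (s : Multiset ℂ)
    (h : ∀ r ∈ s, ‖r‖ ≠ R) :
    (∮ z in C(0, R), (s.map (fun r => (z - r)⁻¹)).sum)
      = (2 * π * I) * (s.filter (fun r => ‖r‖ < R)).card := by
  induction s using Multiset.induction with
  | empty => simp [circleIntegral]
  | cons a t ih =>
    have ha := h a (Multiset.mem_cons_self a t)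
    have ht : ∀ r ∈ t, ‖r‖ ≠ R := fun r hr => h r (Multiset.mem_cons_of_mem hr)
    simp only [Multiset.map_cons, Multiset.sum_cons]
    rw [myIntegralAdd (circleIntegrable_inv_sub hR.le ha) (circleIntegrable_sum_inv hR.le t ht),
      ih ht, Multiset.filter_cons]
    by_cases hlt : ‖a‖ < R
    · rw [circleIntegral.integral_sub_inv_of_mem_ball (by simpa [mem_ball_zero_iff] using hlt)]
      simp [hlt]
      ring
    · have : R < ‖a‖ := lt_of_le_of_ne (not_lt.1 hlt) (Ne.symm ha)
      rw [integral_inv_sub_of_gt hR.le this]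
      simp [hlt]

lemma eval_derivative_prod (s : Multiset ℂ) (z : ℂ) (hz : ∀ r ∈ s, z ≠ r) :
    eval z (derivative (s.map (fun r => (X : ℂ[X]) - C r)).prod)
      = eval z (s.map (fun r => (X : ℂ[X]) - C r)).prod * (s.map (fun r => (z - r)⁻¹)).sum := by
  induction s using Multiset.induction with
  | empty => simp
  | cons a t ih =>
    have hza : z - a ≠ 0 := sub_ne_zero.2 (hz a (Multiset.mem_cons_self a t))
    have iht := ih fun r hr => hz r (Multiset.mem_cons_of_mem hr)
    simp only [Multiset.map_cons, Multiset.prod_cons, Multiset.sum_cons, derivative_mul,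
      derivative_sub, derivative_X, derivative_C, sub_zero, one_mul, eval_add, eval_mul, eval_sub,
      eval_X, eval_C, iht]
    field_simp

theorem count_roots_in_ball (F : ℂ[X]) (c : ℂ) (j : ℕ) {R : ℝ} (hR : 0 < R)
    (hdom : ∀ z : ℂ, ‖z‖ = R →
      ‖F.eval z - c * z ^ j‖ < ‖c * z ^ j‖) :
    (F.roots.filter (fun r => ‖r‖ < R)).card = j := by
  -- basic facts
  have hRz : ‖(R : ℂ)‖ = R := by
    rw [Complex.norm_real, Real.norm_eq_abs, abs_of_pos hR]
  have hc : c ≠ 0 := by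
    intro h
    have hd := hdom (R : ℂ) hRz
    rw [h, zero_mul, sub_zero, norm_zero] at hd
    exact absurd hd (norm_nonneg _).not_gt
  have hFz : ∀ z : ℂ, ‖z‖ = R → F.eval z ≠ 0 := by
    intro z hz h
    have := hdom z hz
    rw [h, zero_sub, norm_neg] at this
    exact lt_irrefl _ this
  have hF0 : F ≠ 0 := by
    intro h
    exact hFz (R : ℂ) hRz (by simp [h])
  have hsplit : Splits F := IsAlgClosed.splits F
  have hroots : ∀ r ∈ F.roots, ‖r‖ ≠ R := by
    intro r hr h
    exact hFz r h ((mem_roots hF0).1 hr)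
  have hznr : ∀ z : ℂ, ‖z‖ = R → ∀ r ∈ F.roots, z ≠ r := by
    intro z hz r hr h
    exact hroots r hr (h ▸ hz)
  have hlc : F.leadingCoeff ≠ 0 := leadingCoeff_ne_zero.2 hF0
  -- E1 : logarithmic derivative equals sum of reciprocals on the sphere
  have hcongr : Set.EqOn (fun z => eval z (derivative F) / eval z F)
      (fun z => ((F.roots.map (fun r => (z - r)⁻¹)).sum)) (sphere (0:ℂ) R) := by
    intro z hz
    rw [mem_sphere_zero_iff_norm] at hz
    have hP := eval_derivative_prod F.roots z (hznr z hz)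
    have hFeq := hsplit.eq_prod_roots
    have hFzne := hFz z hz
    have hPz : eval z (Multiset.map (fun a => (X:ℂ[X]) - C a) F.roots).prod ≠ 0 := by
      intro h
      apply hFzne
      conv_lhs => rw [hFeq]
      simp [h]
    simp only
    conv_lhs => rw [hFeq]
    rw [derivative_C_mul, eval_mul, eval_C, eval_mul, eval_C, hP]
    field_simp
  have hcont : CircleIntegrable (fun z => eval z (derivative F) / eval z F) 0 R := by
    apply ContinuousOn.circleIntegrable hR.le
    apply ContinuousOn.div (by fun_prop) (by fun_prop)
    intro z hz
    rw [mem_sphere_zero_iff_norm] at hz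
    exact hFz z hz
  have E1 : (∮ z in C(0, R), eval z (derivative F) / eval z F)
      = (2 * π * I) * (F.roots.filter (fun r => ‖r‖ < R)).card := by
    rw [circleIntegral.integral_congr hR.le hcongr, integral_sum_inv hR F.roots hroots]
  -- E2 : the integral equals 2πi·j
  have hDeriv : ∀ z ∈ sphere (0:ℂ) R,
      HasDerivAt (fun w => Complex.log (F.eval w / (c * w ^ j)))
        (eval z (derivative F) / eval z F - (j : ℂ) * z⁻¹) z := by
    intro z hz
    rw [mem_sphere_zero_iff_norm] at hz
    have hz0 : z ≠ 0 := by
      intro h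
      rw [h] at hz
      simp at hz
      exact hR.ne' hz.symm
    have hv : c * z ^ j ≠ 0 := mul_ne_zero hc (pow_ne_zero _ hz0)
    have hu : F.eval z ≠ 0 := hFz z hz
    have hd := hdom z hz
    have hq : HasDerivAt (fun w => F.eval w / (c * w ^ j))
        ((eval z (derivative F) * (c * z ^ j) - F.eval z * (c * ((j:ℂ) * z ^ (j-1))))
          / (c * z ^ j) ^ 2) z := by
      exact (Polynomial.hasDerivAt F z).div (((hasDerivAt_pow j z).const_mul c)) hv
    have hqmem : F.eval z / (c * z ^ j) ∈ slitPlane := by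
      rw [mem_slitPlane_iff]
      left
      have h1 : ‖F.eval z / (c * z ^ j) - 1‖ < 1 := by
        rw [div_sub_one hv, norm_div, div_lt_one (norm_pos_iff.2 hv)]
        exact hd
      have h2 : |(F.eval z / (c * z ^ j) - 1).re| ≤ ‖F.eval z / (c * z ^ j) - 1‖ :=
        Complex.abs_re_le_norm _
      have h3 : (F.eval z / (c * z ^ j) - 1).re = (F.eval z / (c * z ^ j)).re - 1 := by simp
      nlinarith [abs_le.1 h2]
    have hlog := (Complex.hasDerivAt_log hqmem).comp z hq
    simp only [Function.comp_def] at hlog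
    refine HasDerivAt.congr_deriv hlog ?_
    field_simp
    rcases j with _ | j0
    · ring
    · simp only [Nat.add_sub_cancel, pow_succ]
      ring
  have hint2 : CircleIntegrable (fun z => (j : ℂ) * z⁻¹) 0 R := by
    apply ContinuousOn.circleIntegrable hR.le
    apply ContinuousOn.mul continuousOn_const
    apply ContinuousOn.inv₀ (by fun_prop)
    intro z hz
    rw [mem_sphere_zero_iff_norm] at hz
    intro h
    rw [h] at hz
    simp at hz
    exact hR.ne' hz.symm
  have E0 : (∮ z in C(0, R), (eval z (derivative F) / eval z F - (j : ℂ) * z⁻¹)) = 0 :=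
    circleIntegral.integral_eq_zero_of_hasDerivWithinAt hR.le
      (fun z hz => (hDeriv z hz).hasDerivWithinAt)
  have E2 : (∮ z in C(0, R), eval z (derivative F) / eval z F) = (2 * π * I) * (j : ℂ) := by
    have := circleIntegral.integral_sub hcont hint2
    rw [E0] at this
    have hz1 : (∮ z in C(0, R), (j : ℂ) * z⁻¹) = (j : ℂ) * (2 * π * I) := by
      rw [circleIntegral.integral_const_mul]
      have := circleIntegral.integral_sub_center_inv (0 : ℂ) hR.ne'
      simp only [sub_zero] at this
      rw [this]
    rw [hz1] at this
    have h4 : (∮ z in C(0, R), eval z (derivative F) / eval z F) = (j : ℂ) * (2 * π * I) := by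
      linear_combination -this
    rw [h4]; ring
  rw [E1] at E2
  have hne : (2 * π * I : ℂ) ≠ 0 := by
    simp [Real.pi_ne_zero, Complex.I_ne_zero]
  have := mul_left_cancel₀ hne E2
  exact_mod_cast this

lemma multiset_prod_lt {R : ℝ} (hR : 0 < R) (s : Multiset ℝ) (hs : s ≠ 0)
    (h : ∀ x ∈ s, 0 ≤ x ∧ x < R) : s.prod < R ^ Multiset.card s := by
  induction s using Multiset.induction with
  | empty => exact absurd rfl hs
  | cons a t ih =>
    rcases eq_or_ne t 0 with rfl | ht
    · simpa using (h a (Multiset.mem_cons_self a 0)).2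
    · have h1 := ih ht (fun x hx => h x (Multiset.mem_cons_of_mem hx))
      have h2 : 0 ≤ t.prod := Multiset.prod_nonneg fun x hx => (h x (Multiset.mem_cons_of_mem hx)).1
      have h3 := h a (Multiset.mem_cons_self a t)
      have h4 : (0:ℝ) < R ^ Multiset.card t := pow_pos hR _
      simp only [Multiset.prod_cons, Multiset.card_cons, pow_succ']
      nlinarith

lemma card_filter_bind {α β : Type*} (s : Multiset α) (f : α → Multiset β)
    (p : β → Prop) [DecidablePred p] :
    Multiset.card ((s.bind f).filter p)
      = (s.map (fun x => Multiset.card ((f x).filter p))).sum := by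
  induction s using Multiset.induction with
  | empty => simp
  | cons a t ih => simp [Multiset.cons_bind, Multiset.filter_add, ih]

end

end Helpers

/-- Corollary 1: Theorem 4 with `b = |a m|` and `δ = 1 / |a m|`. -/
theorem stmt11 (m : ℕ) (hm : 2 ≤ m) (a : ℕ → ℤ) (f : ℤ[X])
    (hf : f = ∑ i ∈ range (m + 1), C (a i) * X ^ i)
    (ha : a 0 * a m ≠ 0) (hprim : f.IsPrimitive)
    (j : ℕ) (hj : j ≤ m - 1)
    (hineq : (|a j| : ℝ) >
      (|a (j + 1)| : ℝ) / (|a m| : ℝ) +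
      (∑ i ∈ range j, (|a i| : ℝ) * (|a m| : ℝ) ^ (j - i)) +
      ∑ i ∈ Icc (j + 2) m, (|a i| : ℝ) / (|a m| : ℝ) ^ (i - j)) :
    ∃ n : ℕ, n ≤ m - j ∧ ∃ g : Fin n → ℤ[X],
      (∀ i, Irreducible (g i)) ∧ f = ∏ i, g i := by
  classical
  have ham : a m ≠ 0 := right_ne_zero_of_mul ha
  have ha0 : a 0 ≠ 0 := left_ne_zero_of_mul ha
  have hjm : j + 1 ≤ m := by omega
  -- coefficients of f
  have hcoeff : ∀ k, k ≤ m → f.coeff k = a k := by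
    intro k hk
    rw [hf, finset_sum_coeff]
    rw [Finset.sum_eq_single k]
    · simp
    · intro b _ hb
      simp [coeff_C_mul, coeff_X_pow, Ne.symm hb]
    · intro hnot
      exact absurd (Finset.mem_range.2 (by omega)) hnot
  have hdegle : f.natDegree ≤ m := by
    rw [hf]
    apply natDegree_sum_le_of_forall_le
    intro i hi
    refine le_trans (natDegree_C_mul_le _ _) ?_
    have := Finset.mem_range.1 hi
    simpa using Nat.lt_succ_iff.1 this
  have hdeg : f.natDegree = m :=
    le_antisymm hdegle (le_natDegree_of_ne_zero (by rw [hcoeff m le_rfl]; exact ham))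
  have hf0 : f ≠ 0 := fun h => ham (by rw [← hcoeff m le_rfl, h, coeff_zero])
  have hlead : f.leadingCoeff = a m := by rw [leadingCoeff, hdeg, hcoeff m le_rfl]
  -- real quantities
  set A : ℝ := (|a m| : ℝ) with hA
  have hA1 : (1:ℝ) ≤ A := by
    rw [hA]
    exact_mod_cast Int.one_le_abs ham
  have hApos : (0:ℝ) < A := lt_of_lt_of_le one_pos hA1
  set R : ℝ := A⁻¹ with hR
  have hRpos : 0 < R := inv_pos.2 hApos
  have hAR : A * R = 1 := mul_inv_cancel₀ hApos.ne'
  have hRle1 : R ≤ 1 := by nlinarith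
  -- index set decomposition
  have hset : (range (m+1)).erase j = range j ∪ Icc (j+1) m := by
    ext x
    simp only [Finset.mem_erase, Finset.mem_range, Finset.mem_union, Finset.mem_Icc]
    omega
  have hdisj : Disjoint (range j) (Icc (j+1) m) := by
    rw [Finset.disjoint_left]
    intro x hx hx2
    simp only [Finset.mem_range] at hx
    simp only [Finset.mem_Icc] at hx2
    omega
  have hIcc : Icc (j+1) m = insert (j+1) (Icc (j+2) m) := by
    ext x
    simp only [Finset.mem_Icc, Finset.mem_insert]
    omega
  have hmem1 : (j+1) ∉ Icc (j+2) m := by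
    simp only [Finset.mem_Icc]
    omega
  -- per-term equalities
  have e1 : ∀ i ∈ range j, (|a i| : ℝ) * R ^ i = ((|a i| : ℝ) * A ^ (j - i)) * R ^ j := by
    intro i hi
    have hij : i ≤ j := (Finset.mem_range.1 hi).le
    have h1 : A ^ (j-i) * R ^ (j-i) = 1 := by rw [← mul_pow, hAR, one_pow]
    have h2 : R ^ j = R ^ (j-i) * R ^ i := by rw [← pow_add]; congr 1; omega
    rw [h2]
    linear_combination (-(|a i| : ℝ) * R ^ i) * h1
  have e2 : ∀ i ∈ Icc (j+2) m, (|a i| : ℝ) * R ^ i = ((|a i| : ℝ) / A ^ (i - j)) * R ^ j := by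
    intro i hi
    have hij : j ≤ i := by
      simp only [Finset.mem_Icc] at hi
      omega
    have h1 : A ^ (i-j) * R ^ (i-j) = 1 := by rw [← mul_pow, hAR, one_pow]
    have h2 : R ^ i = R ^ (i-j) * R ^ j := by rw [← pow_add]; congr 1; omega
    have h3 : (A ^ (i-j))⁻¹ = R ^ (i-j) := inv_eq_of_mul_eq_one_right h1
    rw [h2, div_eq_mul_inv, h3]
    ring
  have e3 : (|a (j+1)| : ℝ) * R ^ (j+1) = ((|a (j+1)| : ℝ) / A) * R ^ j := by
    rw [pow_succ, div_eq_mul_inv, ← hR]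
    ring
  have key : ∑ i ∈ (range (m+1)).erase j, (|a i| : ℝ) * R ^ i
      = ((|a (j+1)| : ℝ) / A + (∑ i ∈ range j, (|a i| : ℝ) * A ^ (j - i))
        + ∑ i ∈ Icc (j+2) m, (|a i| : ℝ) / A ^ (i - j)) * R ^ j := by
    rw [hset, Finset.sum_union hdisj, hIcc, Finset.sum_insert hmem1,
      Finset.sum_congr rfl e1, Finset.sum_congr rfl e2, e3, add_mul, add_mul,
      Finset.sum_mul, Finset.sum_mul]
    ring
  have hsum : ∑ i ∈ (range (m+1)).erase j, (|a i| : ℝ) * R ^ i < (|a j| : ℝ) * R ^ j := by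
    rw [key]
    exact mul_lt_mul_of_pos_right hineq (pow_pos hRpos j)
  -- complex polynomial
  set φ : ℤ →+* ℂ := Int.castRingHom ℂ with hφ
  have hφinj : Function.Injective φ := fun x y h => by
    simpa [hφ] using h
  set F : ℂ[X] := f.map φ with hFdef
  have hevalF : ∀ z : ℂ, F.eval z = ∑ i ∈ range (m+1), (a i : ℂ) * z ^ i := by
    intro z
    rw [hFdef, hf, Polynomial.map_sum, eval_finset_sum]
    apply Finset.sum_congr rfl
    intro i _
    simp [hφ]
  have habsz : ∀ z : ℂ, ‖z‖ = R → ∀ i,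
      ‖(a i : ℂ) * z ^ i‖ = (|a i| : ℝ) * R ^ i := by
    intro z hz i
    rw [norm_mul, norm_pow, hz, Complex.norm_intCast, ← Int.cast_abs]
  have hdom : ∀ z : ℂ, ‖z‖ = R →
      ‖F.eval z - (a j : ℂ) * z ^ j‖ < ‖(a j : ℂ) * z ^ j‖ := by
    intro z hz
    have hjmem : j ∈ range (m+1) := Finset.mem_range.2 (by omega)
    have hsplit2 : F.eval z - (a j : ℂ) * z ^ j
        = ∑ i ∈ (range (m+1)).erase j, (a i : ℂ) * z ^ i := by
      rw [hevalF, ← Finset.add_sum_erase _ _ hjmem]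
      ring
    rw [hsplit2]
    calc ‖∑ i ∈ (range (m+1)).erase j, (a i : ℂ) * z ^ i‖
        ≤ ∑ i ∈ (range (m+1)).erase j, ‖(a i : ℂ) * z ^ i‖ :=
          norm_sum_le _ _
      _ = ∑ i ∈ (range (m+1)).erase j, (|a i| : ℝ) * R ^ i :=
          Finset.sum_congr rfl (fun i _ => habsz z hz i)
      _ < (|a j| : ℝ) * R ^ j := hsum
      _ = ‖(a j : ℂ) * z ^ j‖ := (habsz z hz j).symm
  -- root counting
  have hcount := count_roots_in_ball F ((a j : ℂ)) j hRpos hdom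
  have hFne : F ≠ 0 := (Polynomial.map_ne_zero_iff hφinj).2 hf0
  have hFdeg : F.natDegree = m := by
    rw [hFdef, natDegree_map_eq_of_injective hφinj, hdeg]
  have hcardroots : Multiset.card F.roots = m := by
    have h := (IsAlgClosed.splits F).natDegree_eq_card_roots
    rw [hFdeg] at h
    omega
  have hbig : Multiset.card (F.roots.filter (fun r => ¬ ‖r‖ < R)) = m - j := by
    have h1 := congrArg Multiset.card
      (Multiset.filter_add_not (fun r => ‖r‖ < R) F.roots)
    rw [Multiset.card_add, hcount, hcardroots] at h1
    omega
  -- factorization into irreducibles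
  have hnotunit : ¬ IsUnit f := fun h => by
    have := natDegree_eq_zero_of_isUnit h
    omega
  obtain ⟨s, hsirr, hsprod, hsne⟩ :=
    (WfDvdMonoid.not_unit_iff_exists_factors_eq f hf0).1 hnotunit
  -- every irreducible factor has a root of modulus ≥ R
  have hcnt : ∀ p ∈ s,
      1 ≤ Multiset.card (((p.map φ).roots).filter (fun r => ¬ ‖r‖ < R)) := by
    intro p hps
    have hpirr := hsirr p hps
    have hpdvd : p ∣ f := hsprod ▸ Multiset.dvd_prod hps
    obtain ⟨q, hq⟩ := hpdvd
    have hpne : p ≠ 0 := hpirr.ne_zero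
    have hpd : 1 ≤ p.natDegree := by
      rcases Nat.eq_zero_or_pos p.natDegree with h0 | h1
      · exfalso
        have hC := eq_C_of_natDegree_eq_zero h0
        have hu : IsUnit (p.coeff 0) := hprim (p.coeff 0) (by rw [← hC]; exact ⟨q, hq⟩)
        exact hpirr.not_isUnit (hC ▸ hu.map C)
      · exact h1
    set P : ℂ[X] := p.map φ with hPdef
    have hPne : P ≠ 0 := (Polynomial.map_ne_zero_iff hφinj).2 hpne
    have hPdeg : P.natDegree = p.natDegree := natDegree_map_eq_of_injective hφinj p
    have hPcard : Multiset.card P.roots = p.natDegree := by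
      have h := (IsAlgClosed.splits P).natDegree_eq_card_roots
      rw [hPdeg] at h
      omega
    by_contra hcon
    rw [not_le] at hcon
    have hfilter0 : P.roots.filter (fun r => ¬ ‖r‖ < R) = 0 := by
      rw [← Multiset.card_eq_zero]
      exact Nat.lt_one_iff.1 hcon
    have hallroots : ∀ r ∈ P.roots, ‖r‖ < R := by
      intro r hr
      by_contra hrr
      have hmem : r ∈ P.roots.filter (fun r => ¬ ‖r‖ < R) :=
        Multiset.mem_filter.2 ⟨hr, hrr⟩
      rw [hfilter0] at hmem
      exact absurd hmem (Multiset.notMem_zero r)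
    have hPfac := (IsAlgClosed.splits P).eq_prod_roots
    have hPlead : P.leadingCoeff = ((p.leadingCoeff : ℤ) : ℂ) := leadingCoeff_map_of_injective hφinj p
    have hleadpos : 0 < ‖P.leadingCoeff‖ :=
      norm_pos_iff.2 (leadingCoeff_ne_zero.2 hPne)
    have hP0 : ‖P.eval 0‖
        = ‖P.leadingCoeff‖ * ((P.roots.map (fun r => ‖r‖)).prod) := by
      conv_lhs => rw [hPfac]
      rw [eval_mul, eval_C, eval_multiset_prod, Multiset.map_map, norm_mul,
        (map_multiset_prod (normHom : ℂ →*₀ ℝ) _ : ‖Multiset.prod _‖ = _), Multiset.map_map]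
      congr 2
      apply Multiset.map_congr rfl
      intro r _
      simp
    have hprodlt : (P.roots.map (fun r => ‖r‖)).prod < R ^ p.natDegree := by
      have hne0 : P.roots.map (fun r => ‖r‖) ≠ 0 := by
        intro h
        have := congrArg Multiset.card h
        rw [Multiset.card_map, hPcard] at this
        simp at this
        omega
      have hb : ∀ x ∈ P.roots.map (fun r => ‖r‖), 0 ≤ x ∧ x < R := by
        intro x hx
        obtain ⟨r, hr, rfl⟩ := Multiset.mem_map.1 hx
        exact ⟨norm_nonneg r, hallroots r hr⟩
      have h := multiset_prod_lt hRpos _ hne0 hb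
      rwa [Multiset.card_map, hPcard] at h
    have habsP0 : ‖P.eval 0‖ < ‖P.leadingCoeff‖ * R ^ p.natDegree := by
      rw [hP0]
      exact mul_lt_mul_of_pos_left hprodlt hleadpos
    have h1 : ‖P.leadingCoeff‖ = ((|p.leadingCoeff| : ℤ) : ℝ) := by
      rw [hPlead, Complex.norm_intCast, ← Int.cast_abs]
    have hldvd : p.leadingCoeff ∣ a m := by
      rw [← hlead, hq, leadingCoeff_mul]
      exact Dvd.intro _ rfl
    have hlle : ((|p.leadingCoeff| : ℤ) : ℝ) ≤ A := by
      have hint : |p.leadingCoeff| ≤ |a m| :=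
        Int.le_of_dvd (abs_pos.2 ham) ((abs_dvd _ _).2 ((dvd_abs _ _).2 hldvd))
      rw [hA]
      exact_mod_cast hint
    have hP0eval : P.eval 0 = ((p.eval 0 : ℤ) : ℂ) := eval_zero_map φ p
    have habs_small : ((|p.eval 0| : ℤ) : ℝ) < 1 := by
      have h2 : ‖P.eval 0‖ = ((|p.eval 0| : ℤ) : ℝ) := by
        rw [hP0eval, Complex.norm_intCast, ← Int.cast_abs]
      have h3 : R ^ p.natDegree ≤ R := by
        have := pow_le_pow_of_le_one hRpos.le hRle1 hpd
        simpa using this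
      calc ((|p.eval 0| : ℤ) : ℝ) = ‖P.eval 0‖ := h2.symm
        _ < ‖P.leadingCoeff‖ * R ^ p.natDegree := habsP0
        _ ≤ A * R := by
            apply mul_le_mul (by rw [h1]; exact hlle) h3 (pow_nonneg hRpos.le _) hApos.le
        _ = 1 := hAR
    have hev0 : p.eval 0 = 0 := by
      have h5 : |p.eval 0| < 1 := by exact_mod_cast habs_small
      rw [abs_lt] at h5
      omega
    have hfeval0 : f.eval 0 = 0 := by rw [hq, eval_mul, hev0, zero_mul]
    rw [← coeff_zero_eq_eval_zero, hcoeff 0 (by omega)] at hfeval0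
    exact ha0 hfeval0
  -- sum the counts over factors
  have hFprod : F = (s.map (fun p => p.map φ)).prod := by
    rw [hFdef, ← hsprod]
    have := map_multiset_prod (mapRingHom φ) s
    simpa [coe_mapRingHom] using this
  have h0nm : (0 : ℂ[X]) ∉ s.map (fun p => p.map φ) := by
    intro h
    obtain ⟨p, hps, hp0⟩ := Multiset.mem_map.1 h
    exact (Polynomial.map_ne_zero_iff hφinj).2 (hsirr p hps).ne_zero hp0
  have hFroots : F.roots = (s.map (fun p => p.map φ)).bind Polynomial.roots := by
    rw [hFprod]
    exact roots_multiset_prod _ h0nm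
  have hsumcard : Multiset.card (F.roots.filter (fun r => ¬ ‖r‖ < R))
      = (s.map (fun p =>
          Multiset.card (((p.map φ).roots).filter (fun r => ¬ ‖r‖ < R)))).sum := by
    rw [hFroots, card_filter_bind, Multiset.map_map]
    rfl
  have hcard_le : Multiset.card s ≤ m - j := by
    have h1 : (s.map (fun _ => (1:ℕ))).sum ≤ (s.map (fun p =>
        Multiset.card (((p.map φ).roots).filter (fun r => ¬ ‖r‖ < R)))).sum :=
      Multiset.sum_map_le_sum_map _ _ hcnt
    have h2 : (s.map (fun _ => (1:ℕ))).sum = Multiset.card s := by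
      simp [Multiset.map_const', Multiset.sum_replicate]
    rw [h2, ← hsumcard, hbig] at h1
    exact h1
  -- assemble the result
  refine ⟨s.toList.length, by rwa [Multiset.length_toList], fun i => s.toList[(i : ℕ)], ?_, ?_⟩
  · intro i
    apply hsirr
    rw [← Multiset.mem_toList]
    exact List.getElem_mem _
  · rw [← hsprod, ← Multiset.prod_toList, ← Fin.prod_univ_getElem]
end

section
/- For a prime p and integers m ≥ n ≥ 2, the polynomial P(z) = p^{m-1}(1 + z + z^2 + ... + z^{n-1}) ± z^m is irreducible in ℤ[z]. -/
open Polynomial Finset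

lemma irreducible_of_irreducible_reverse' {R : Type*} [CommRing R] [IsDomain R] {f : R[X]}
    (h0 : f.coeff 0 ≠ 0) (hf : Irreducible f.reverse) : Irreducible f := by
  have key : ∀ a : R[X], a.coeff 0 ≠ 0 → IsUnit a.reverse → IsUnit a := by
    intro a ha hu
    have hd : a.reverse.natDegree = 0 := natDegree_eq_zero_of_isUnit hu
    rw [reverse_natDegree] at hd
    have ht : a.natTrailingDegree = 0 := natTrailingDegree_eq_zero.mpr (Or.inr ha)
    have hda : a.natDegree = 0 := by omega
    have := eq_C_of_natDegree_eq_zero hda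
    rw [this] at hu ⊢
    rwa [reverse_C] at hu
  constructor
  · intro hu
    have := eq_C_of_natDegree_eq_zero (natDegree_eq_zero_of_isUnit hu)
    exact hf.not_isUnit (by rw [this, reverse_C]; rw [this] at hu; exact hu)
  · rintro a b rfl
    rw [mul_coeff_zero] at h0
    rw [reverse_mul_of_domain] at hf
    rcases hf.isUnit_or_isUnit rfl with h | h
    · exact Or.inl (key a (left_ne_zero_of_mul h0) h)
    · exact Or.inr (key b (right_ne_zero_of_mul h0) h)

/-- Example 1: `p^(m-1) (1 + z + ⋯ + z^(n-1)) ± z^m` is irreducible. -/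
theorem stmt13 (p : ℕ) (hp : p.Prime) (m n : ℕ) (hn : 2 ≤ n) (hmn : n ≤ m)
    (ε : ℤ) (hε : ε = 1 ∨ ε = -1) :
    Irreducible (C ((p : ℤ) ^ (m - 1)) * (∑ i ∈ range n, X ^ i) + C ε * X ^ m) := by
  have hm2 : 2 ≤ m := hn.trans hmn
  have hm1 : 1 ≤ m := by omega
  have hpne : (p : ℤ) ≠ 0 := Int.natCast_ne_zero.mpr hp.ne_zero
  have hpQne : (p : ℚ) ≠ 0 := Nat.cast_ne_zero.mpr hp.ne_zero
  have hpprime : Prime (p : ℤ) := Nat.prime_iff_prime_int.mp hp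
  have hεu : IsUnit ε := Int.isUnit_iff.mpr hε
  have hεne : ε ≠ 0 := hεu.ne_zero
  set P : ℤ[X] := C ((p : ℤ) ^ (m - 1)) * (∑ i ∈ range n, X ^ i) + C ε * X ^ m with hPdef
  set G : ℤ[X] := (∑ i ∈ range n, C ((p : ℤ) ^ i) * X ^ i) + C (ε * p) * X ^ m with hGdef
  -- coefficients of G
  have hGcoeff : ∀ k, G.coeff k
      = (if k < n then (p : ℤ) ^ k else 0) + (if k = m then ε * p else 0) := by
    intro k
    rw [hGdef, coeff_add, finset_sum_coeff]
    simp only [coeff_C_mul, coeff_X_pow, mul_ite, mul_one, mul_zero, eq_comm (b := k)]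
    rw [Finset.sum_ite_eq (range n) k (fun i => (p : ℤ) ^ i)]
    simp [Finset.mem_range]
  have hG0 : G.coeff 0 = 1 := by
    rw [hGcoeff]; simp [show 0 < n by omega, show ¬(0 = m) by omega]
  have hGm : G.coeff m = ε * p := by
    rw [hGcoeff]; simp [show ¬(m < n) by omega]
  have hGtop : ∀ k, m < k → G.coeff k = 0 := by
    intro k hk; rw [hGcoeff]; simp [show ¬(k < n) by omega, show ¬(k = m) by omega]
  have hGdeg : G.natDegree = m :=
    le_antisymm (natDegree_le_iff_coeff_eq_zero.mpr hGtop)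
      (le_natDegree_of_ne_zero (by rw [hGm]; exact mul_ne_zero hεne hpne))
  have hG0ne : G.coeff 0 ≠ 0 := by rw [hG0]; exact one_ne_zero
  -- the reverse H of G is Eisenstein at p
  set H : ℤ[X] := G.reverse with hHdef
  have hHcoeff : ∀ k, k ≤ m → H.coeff k = G.coeff (m - k) := by
    intro k hk
    rw [hHdef, coeff_reverse, hGdeg, revAt_le hk]
  have hHtd : G.natTrailingDegree = 0 := natTrailingDegree_eq_zero.mpr (Or.inr hG0ne)
  have hHdeg : H.natDegree = m := by
    rw [hHdef, reverse_natDegree, hGdeg, hHtd, Nat.sub_zero]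
  have hHmon : H.Monic := by
    rw [Monic, leadingCoeff, hHdeg, hHcoeff m le_rfl, Nat.sub_self, hG0]
  have hHne : H ≠ 0 := hHmon.ne_zero
  have hHdegree : H.degree = (m : ℕ) := by rw [degree_eq_natDegree hHne, hHdeg]
  have hHirr : Irreducible H := by
    refine irreducible_of_eisenstein_criterion
      ((Ideal.span_singleton_prime hpne).mpr hpprime) ?_ ?_ ?_ ?_ hHmon.isPrimitive
    · rw [hHmon.leadingCoeff, Ideal.mem_span_singleton]
      exact fun h => hpprime.not_unit (isUnit_of_dvd_one h)
    · intro k hk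
      rw [hHdegree] at hk
      have hkm : k < m := by exact_mod_cast hk
      rw [hHcoeff k hkm.le, Ideal.mem_span_singleton, hGcoeff]
      refine dvd_add ?_ ?_ <;> split_ifs
      · exact dvd_pow_self _ (by omega)
      · exact dvd_zero _
      · exact dvd_mul_left _ _
      · exact dvd_zero _
    · rw [hHdegree]; exact_mod_cast (show 0 < m by omega)
    · rw [hHcoeff 0 (by omega), Nat.sub_zero, hGm, Ideal.span_singleton_pow,
        Ideal.mem_span_singleton, sq]
      intro h
      have : (p : ℤ) ∣ ε := (mul_dvd_mul_iff_right hpne).mp h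
      exact hpprime.not_unit (isUnit_of_dvd_unit this hεu)
  have hGirr : Irreducible G := irreducible_of_irreducible_reverse' hG0ne hHirr
  -- transfer to ℚ
  have hGprim : G.IsPrimitive := fun r hr => by
    have := (C_dvd_iff_dvd_coeff r G).mp hr 0
    rw [hG0] at this
    exact isUnit_of_dvd_one this
  have hGqirr : Irreducible (G.map (Int.castRingHom ℚ)) :=
    (IsPrimitive.Int.irreducible_iff_irreducible_map_cast hGprim).mp hGirr
  -- coefficients of P
  have hPcoeff : ∀ k, P.coeff k
      = (if k < n then (p : ℤ) ^ (m - 1) else 0) + (if k = m then ε else 0) := by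
    intro k
    rw [hPdef, coeff_add, coeff_C_mul, coeff_C_mul, coeff_X_pow, finset_sum_coeff]
    simp only [coeff_X_pow, mul_ite, mul_one, mul_zero, eq_comm (b := k)]
    rw [Finset.sum_ite_eq (range n) k (fun _ => (1 : ℤ))]
    simp [Finset.mem_range, mul_ite]
  have hPm : P.coeff m = ε := by
    rw [hPcoeff]; simp [show ¬(m < n) by omega]
  have hPprim : P.IsPrimitive := fun r hr => by
    have := (C_dvd_iff_dvd_coeff r P).mp hr m
    rw [hPm] at this
    exact isUnit_of_dvd_unit this hεu
  rw [IsPrimitive.Int.irreducible_iff_irreducible_map_cast hPprim]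
  set Pq : ℚ[X] := P.map (Int.castRingHom ℚ) with hPqdef
  set Gq : ℚ[X] := G.map (Int.castRingHom ℚ) with hGqdef
  -- the key identity : Pq (p X) = p^(m-1) * Gq
  have hpow : (p : ℚ) ^ m = (p : ℚ) ^ (m - 1) * p := by
    rw [← pow_succ, Nat.sub_add_cancel hm1]
  have hcomp : Pq.comp (C (p : ℚ) * X) = C ((p : ℚ) ^ (m - 1)) * Gq := by
    rw [hPqdef, hGqdef, hPdef, hGdef]
    simp only [Polynomial.map_add, Polynomial.map_mul, Polynomial.map_pow, map_C, map_X,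
      Polynomial.map_sum, add_comp, mul_comp, C_comp, X_comp, Polynomial.sum_comp, pow_comp,
      mul_pow, ← C_pow, ← C_mul, mul_add, Finset.mul_sum]
    rw [hpow]
    simp only [map_pow, map_natCast, map_intCast, map_mul]
    congr 1
    ring
  have hPqm : Pq.coeff m = (ε : ℚ) := by
    rw [hPqdef, coeff_map, hPm]; rfl
  have hεQne : (ε : ℚ) ≠ 0 := Int.cast_ne_zero.mpr hεne
  have hPqne : Pq ≠ 0 := fun h => hεQne (by rw [← hPqm, h, coeff_zero])
  have hUnit : IsUnit (C ((p : ℚ) ^ (m - 1))) :=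
    isUnit_C.mpr (IsUnit.mk0 _ (pow_ne_zero _ hpQne))
  have hcompirr : Irreducible (Pq.comp (C (p : ℚ) * X)) := by
    rw [hcomp]
    exact (Associated.symm ⟨hUnit.unit, by simp [mul_comm]⟩ : Associated _ Gq).symm.irreducible
      hGqirr
  have key2 : ∀ a : ℚ[X], a ≠ 0 → IsUnit (a.comp (C (p : ℚ) * X)) → IsUnit a := by
    intro a ha hu
    have hd := natDegree_eq_zero_of_isUnit hu
    rw [natDegree_comp, natDegree_C_mul_X _ hpQne, mul_one] at hd
    rw [eq_C_of_natDegree_eq_zero hd]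
    refine isUnit_C.mpr (IsUnit.mk0 _ (fun h => ha ?_))
    rw [eq_C_of_natDegree_eq_zero hd, h, map_zero]
  constructor
  · intro hu
    have h0 := natDegree_eq_zero_of_isUnit hu
    have : m ≤ Pq.natDegree := le_natDegree_of_ne_zero (by rw [hPqm]; exact hεQne)
    omega
  · rintro a b hab
    have ha : a ≠ 0 := fun h => hPqne (by rw [hab, h, zero_mul])
    have hb : b ≠ 0 := fun h => hPqne (by rw [hab, h, mul_zero])
    have h2 : (a.comp (C (p : ℚ) * X)) * (b.comp (C (p : ℚ) * X))
        = Pq.comp (C (p : ℚ) * X) := by rw [hab, mul_comp]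
    rcases (h2 ▸ hcompirr).isUnit_or_isUnit rfl with h | h
    · exact Or.inl (key2 a ha h)
    · exact Or.inr (key2 b hb h)
end

section
/- Let p be a prime and k, d, m positive integers with m ≥ 2 and p not dividing d, and let P(z) = ± p^k d + a_1 z + ... + a_m z^m ∈ ℤ[z] with p^k > m · max{|a_1|, |a_2| d, ..., |a_m| d^{m-1}}. Then every complex zero of P satisfies |z| > d. -/
open Polynomial Finset

/-- Example 2 (zero location): all zeros of `±p^k d + a₁ z + ⋯ + a_m z^m` lie
outside the closed disk `|z| ≤ d`. -/
theorem stmt14 (p : ℕ) (hp : p.Prime) (k : ℕ) (hk : 1 ≤ k) (d : ℤ) (hd : 0 < d)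
    (hpd : ¬ (p : ℤ) ∣ d) (m : ℕ) (hm : 2 ≤ m)
    (a : ℕ → ℤ) (ham : a m ≠ 0)
    (ε : ℤ) (hε : ε = 1 ∨ ε = -1)
    (P : ℤ[X])
    (hP : P = C (ε * (p : ℤ) ^ k * d) + ∑ i ∈ Icc 1 m, C (a i) * X ^ i)
    (hbig : ∀ i, 1 ≤ i → i ≤ m → (p : ℤ) ^ k > (m : ℤ) * (|a i| * d ^ (i - 1))) :
    ∀ z : ℂ, aeval z P = 0 → (d : ℝ) < ‖z‖ := by
  intro z hz
  by_contra hle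
  push_neg at hle
  have hd0 : (0:ℝ) < (d:ℝ) := by exact_mod_cast hd
  have hm0 : (0:ℝ) < (m:ℝ) := by positivity
  have hpk : (0:ℝ) < (p:ℝ)^k := by
    have := hp.pos; positivity
  -- evaluate
  subst hP
  simp only [map_add, map_sum, map_mul, map_pow, aeval_C, aeval_X, algebraMap_int_eq, eq_intCast, map_intCast] at hz
  have key : ((ε : ℂ) * (p:ℂ)^k * (d:ℂ)) = - ∑ i ∈ Icc 1 m, (a i : ℂ) * z ^ i := by
    push_cast at hz ⊢
    linear_combination hz
  have habs : (p:ℝ)^k * (d:ℝ) = ‖∑ i ∈ Icc 1 m, (a i : ℂ) * z ^ i‖ := by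
    rw [← norm_neg, ← key]
    rcases hε with h | h <;> subst h <;>
      simp [Complex.norm_natCast, abs_of_pos hd0, norm_mul, norm_pow] <;>
      rw [abs_of_pos hd0]
  have hbound : ‖∑ i ∈ Icc 1 m, (a i : ℂ) * z ^ i‖
      ≤ ∑ i ∈ Icc 1 m, |(a i : ℝ)| * (d:ℝ) ^ i := by
    refine le_trans (norm_sum_le _ _) ?_
    refine Finset.sum_le_sum fun i hi => ?_
    rw [norm_mul, norm_pow]
    have : ‖(a i : ℂ)‖ = |(a i : ℝ)| := by
      rw [← Complex.ofReal_intCast, Complex.norm_real, Real.norm_eq_abs]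
    rw [this]
    exact mul_le_mul_of_nonneg_left
      (pow_le_pow_left₀ (norm_nonneg z) hle i) (abs_nonneg _)
  have hstrict : ∑ i ∈ Icc 1 m, |(a i : ℝ)| * (d:ℝ) ^ i < (p:ℝ)^k * (d:ℝ) := by
    have hne : (Icc 1 m).Nonempty := ⟨1, by simp; omega⟩
    have h1 : ∀ i ∈ Icc 1 m, |(a i : ℝ)| * (d:ℝ) ^ i < (p:ℝ)^k / m * (d:ℝ) := by
      intro i hi
      simp only [mem_Icc] at hi
      have hb := hbig i hi.1 hi.2
      have hb' : (m:ℝ) * (|(a i : ℝ)| * (d:ℝ) ^ (i-1)) < (p:ℝ)^k := by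
        have : ((m : ℤ) * (|a i| * d ^ (i - 1)) : ℝ) < ((p:ℤ)^k : ℝ) := by
          exact_mod_cast hb
        push_cast at this
        convert this using 3
      have h2 : |(a i : ℝ)| * (d:ℝ) ^ (i-1) < (p:ℝ)^k / m := by
        rw [lt_div_iff₀ hm0]; linarith [hb']
      have : (d:ℝ)^i = (d:ℝ)^(i-1) * (d:ℝ) := by
        rw [← pow_succ]; congr 1; omega
      rw [this, ← mul_assoc]
      exact mul_lt_mul_of_pos_right h2 hd0
    calc ∑ i ∈ Icc 1 m, |(a i : ℝ)| * (d:ℝ) ^ i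
        < ∑ _i ∈ Icc 1 m, (p:ℝ)^k / m * (d:ℝ) := Finset.sum_lt_sum_of_nonempty hne h1
      _ = (p:ℝ)^k * (d:ℝ) := by
          rw [Finset.sum_const, Nat.card_Icc]
          simp only [nsmul_eq_mul, Nat.add_sub_cancel]
          field_simp
  rw [← habs] at hbound
  linarith
end

section
/- Let p be a prime and d a positive integer with p not dividing d, m ≥ 2, and let P(z) = ± p d + a_1 z + ... + a_m z^m ∈ ℤ[z] be primitive with p > m · max{|a_1|, |a_2| d, ..., |a_m| d^{m-1}}. Then P is irreducible in ℤ[z]. -/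
open Polynomial Finset

private lemma multiset_prod_gt {d : ℝ} (hd : 1 ≤ d) (s : Multiset ℝ) (hs : s ≠ 0)
    (h : ∀ x ∈ s, d < x) : d < s.prod := by
  obtain ⟨r, hr⟩ := Multiset.exists_mem_of_ne_zero hs
  obtain ⟨t, rfl⟩ := Multiset.exists_cons_of_mem hr
  rw [Multiset.prod_cons]
  have hr' : d < r := h r (Multiset.mem_cons_self _ _)
  have ht : (1:ℝ) ≤ t.prod := by
    apply Multiset.one_le_prod
    intro x hx
    exact le_trans hd (le_of_lt (h x (Multiset.mem_cons_of_mem hx)))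
  calc d < r := hr'
    _ = r * 1 := (mul_one r).symm
    _ ≤ r * t.prod := by
        apply mul_le_mul_of_nonneg_left ht (le_trans (by linarith) (le_of_lt hr'))

/-- Example 2 (irreducibility, case `k = 1`). -/
theorem stmt15 (p : ℕ) (hp : p.Prime) (d : ℤ) (hd : 0 < d)
    (hpd : ¬ (p : ℤ) ∣ d) (m : ℕ) (hm : 2 ≤ m)
    (a : ℕ → ℤ) (ham : a m ≠ 0)
    (ε : ℤ) (hε : ε = 1 ∨ ε = -1)
    (P : ℤ[X])
    (hP : P = C (ε * (p : ℤ) * d) + ∑ i ∈ Icc 1 m, C (a i) * X ^ i)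
    (hprim : P.IsPrimitive)
    (hbig : ∀ i, 1 ≤ i → i ≤ m → (p : ℤ) > (m : ℤ) * (|a i| * d ^ (i - 1))) :
    Irreducible P := by
  have hεu : IsUnit ε := by rcases hε with h | h <;> simp [h]
  have hp0 : (0:ℤ) < (p:ℤ) := by exact_mod_cast hp.pos
  have hpZ : Prime (p : ℤ) := Nat.prime_iff_prime_int.mp hp
  -- coefficients
  have hc0 : P.coeff 0 = ε * (p:ℤ) * d := by
    rw [hP, coeff_add, finset_sum_coeff, Finset.sum_eq_zero, add_zero, coeff_C]
    · simp
    · intro i hi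
      have : i ≠ 0 := by have := (mem_Icc.mp hi).1; omega
      simp [coeff_C_mul, coeff_X_pow, Ne.symm this]
  have hcm : P.coeff m = a m := by
    rw [hP, coeff_add, finset_sum_coeff, coeff_C, if_neg (by omega)]
    rw [Finset.sum_eq_single m]
    · simp
    · intro i hi hne
      rw [coeff_C_mul, coeff_X_pow, if_neg (fun h => hne h.symm), mul_zero]
    · intro h; exact absurd (mem_Icc.mpr ⟨by omega, le_refl m⟩) h
  have hPne : P ≠ 0 := fun h => ham (by rw [← hcm, h, coeff_zero])
  have hdegle : P.natDegree ≤ m := by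
    rw [hP]
    apply le_trans (natDegree_add_le _ _)
    simp only [natDegree_C, max_le_iff]
    constructor
    · omega
    · apply natDegree_sum_le_of_forall_le
      intro i hi
      apply le_trans (natDegree_C_mul_le _ _)
      simp [natDegree_X_pow, (mem_Icc.mp hi).2]
  have hdeg : P.natDegree = m :=
    le_antisymm hdegle (le_natDegree_of_ne_zero (hcm ▸ ham))
  -- root bound
  have hroot : ∀ z : ℂ, Polynomial.aeval z P = 0 → (d:ℝ) < ‖z‖ := by
    intro z hz
    by_contra hle
    push_neg at hle
    have hd1 : (1:ℝ) ≤ (d:ℝ) := by exact_mod_cast hd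
    have hev : (ε:ℂ) * p * d + ∑ i ∈ Icc 1 m, (a i : ℂ) * z ^ i = 0 := by
      rw [hP] at hz
      simpa [map_sum, mul_comm] using hz
    have habs : (p:ℝ) * d = ‖(∑ i ∈ Icc 1 m, (a i : ℂ) * z ^ i)‖ := by
      have : (∑ i ∈ Icc 1 m, (a i : ℂ) * z ^ i) = -((ε:ℂ) * p * d) := by
        linear_combination hev
      rw [this, norm_neg]
      rcases hε with h | h <;>
        simp [h, norm_mul, Complex.norm_natCast, Complex.norm_intCast, abs_of_pos hd] <;>
        push_cast <;> ring_nf <;>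
        simp [abs_of_pos (show (0:ℝ) < (d:ℝ) by exact_mod_cast hd)]
    have hle2 : ‖(∑ i ∈ Icc 1 m, (a i : ℂ) * z ^ i)‖
        ≤ ∑ i ∈ Icc 1 m, |(a i : ℝ)| * (d:ℝ) ^ i := by
      apply le_trans (norm_sum_le _ _)
      apply Finset.sum_le_sum
      intro i hi
      rw [norm_mul, Complex.norm_intCast, norm_pow]
      apply mul_le_mul_of_nonneg_left _ (abs_nonneg _)
      exact pow_le_pow_left₀ (norm_nonneg z) hle i
    have hlt : ∑ i ∈ Icc 1 m, |(a i : ℝ)| * (d:ℝ) ^ i < (p:ℝ) * d := by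
      have hcard : (Icc 1 m).card = m := by rw [Nat.card_Icc]; omega
      calc ∑ i ∈ Icc 1 m, |(a i : ℝ)| * (d:ℝ) ^ i
          < ∑ _i ∈ Icc 1 m, (p:ℝ) * d / m := by
            apply Finset.sum_lt_sum_of_nonempty ⟨1, mem_Icc.mpr ⟨le_refl 1, by omega⟩⟩
            intro i hi
            obtain ⟨hi1, him⟩ := mem_Icc.mp hi
            have hb := hbig i hi1 him
            have hbR : (m:ℝ) * (|(a i : ℝ)| * (d:ℝ) ^ (i-1)) < p := by
              have : ((m : ℤ) * (|a i| * d ^ (i - 1)) : ℤ) < (p:ℤ) := hb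
              calc (m:ℝ) * (|(a i : ℝ)| * (d:ℝ) ^ (i-1))
                  = (((m : ℤ) * (|a i| * d ^ (i - 1)) : ℤ) : ℝ) := by push_cast; ring
                _ < ((p:ℤ):ℝ) := by exact_mod_cast this
                _ = (p:ℝ) := by push_cast; ring
            have hdpow : (d:ℝ) ^ i = (d:ℝ) ^ (i-1) * d := by
              rw [← pow_succ]; congr 1; omega
            have hm0 : (0:ℝ) < (m:ℝ) := by positivity
            rw [lt_div_iff₀ hm0, hdpow]
            nlinarith [abs_nonneg ((a i : ℝ)), pow_nonneg (le_trans zero_le_one hd1) (i-1)]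
        _ = (p:ℝ) * d := by
            rw [Finset.sum_const, hcard, nsmul_eq_mul]
            field_simp
    have : |(a 1 : ℝ)| = |(a 1:ℝ)| := rfl
    linarith [habs ▸ hle2]
  -- key step
  have key : ∀ f g : ℤ[X], P = f * g → ¬ (p:ℤ) ∣ g.coeff 0 → IsUnit g := by
    intro f g hfg hpg
    have hgne : g ≠ 0 := fun h => hPne (by rw [hfg, h, mul_zero])
    have hc0' : f.coeff 0 * g.coeff 0 = ε * (p:ℤ) * d := by
      rw [← hc0, hfg, mul_coeff_zero]
    -- g.coeff 0 divides d
    have hpf : (p:ℤ) ∣ f.coeff 0 := by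
      have : (p:ℤ) ∣ f.coeff 0 * g.coeff 0 := by
        rw [hc0']; exact ⟨ε * d, by ring⟩
      exact (hpZ.dvd_mul.mp this).resolve_right hpg
    obtain ⟨c, hcc⟩ := hpf
    have hcg : c * g.coeff 0 = ε * d := by
      have h2 : (p:ℤ) * (c * g.coeff 0) = ε * (p:ℤ) * d := by
        rw [← hc0', hcc]; ring
      have h3 : (p:ℤ) * (c * g.coeff 0) = (p:ℤ) * (ε * d) := by rw [h2]; ring
      exact mul_left_cancel₀ (ne_of_gt hp0) h3
    have hgd : g.coeff 0 ∣ d := by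
      rcases hε with h | h
      · exact ⟨c, by rw [h, one_mul] at hcg; linarith [hcg]⟩
      · exact ⟨-c, by rw [h] at hcg; linarith [hcg]⟩
    have hg0ne : g.coeff 0 ≠ 0 := by
      intro h
      exact absurd (h ▸ hgd) (by simp; omega)
    have hg0le : |g.coeff 0| ≤ d := Int.le_of_dvd hd ((abs_dvd _ _).mpr hgd)
    -- g is constant
    have hgdeg : g.natDegree = 0 := by
      by_contra hne
      have hgdeg1 : 1 ≤ g.natDegree := Nat.one_le_iff_ne_zero.mpr hne
      set φ := Int.castRingHom ℂ with hφ
      have hinj : Function.Injective (φ : ℤ → ℂ) := Int.cast_injective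
      set gC := g.map φ with hgC
      have hgCne : gC ≠ 0 := (Polynomial.map_ne_zero_iff hinj).mpr hgne
      have hsplit : gC.Splits := IsAlgClosed.splits gC
      have hcardroots : gC.roots.card = gC.natDegree :=
        (splits_iff_card_roots).mp hsplit
      have hdegmap : gC.natDegree = g.natDegree :=
        natDegree_map_eq_of_injective hinj g
      have hd1R : (1:ℝ) ≤ (d:ℝ) := by exact_mod_cast hd
      -- evaluate at 0
      have hev0 : gC.eval 0 = (g.coeff 0 : ℂ) := by
        rw [hgC, eval_map, eval₂_at_zero]; rfl
      have habs0 : ‖gC.eval 0‖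
          = ‖gC.leadingCoeff‖ * ((gC.roots.map (‖·‖)).prod) := by
        rw [hsplit.eval_eq_prod_roots, norm_mul]
        congr 1
        rw [show ∀ s : Multiset ℂ, ‖s.prod‖ = (s.map (‖·‖)).prod from fun s => by
          induction s using Multiset.induction_on <;> simp [*], Multiset.map_map]
        congr 1
        apply Multiset.map_congr rfl
        intro r _
        simp
      have hlead : (1:ℝ) ≤ ‖gC.leadingCoeff‖ := by
        have hl : gC.leadingCoeff = (g.leadingCoeff : ℂ) :=
          leadingCoeff_map_of_leadingCoeff_ne_zero φ
            (by
              show (g.leadingCoeff : ℂ) ≠ 0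
              exact_mod_cast (leadingCoeff_ne_zero.mpr hgne))
        rw [hl, Complex.norm_intCast]
        exact_mod_cast Int.one_le_abs (leadingCoeff_ne_zero.mpr hgne)
      have hprodgt : (d:ℝ) < (gC.roots.map (‖·‖)).prod := by
        apply multiset_prod_gt hd1R
        · intro h0
          have : gC.roots = 0 := by
            rwa [Multiset.map_eq_zero] at h0
          rw [this] at hcardroots
          simp at hcardroots
          omega
        · intro x hx
          obtain ⟨r, hr, rfl⟩ := Multiset.mem_map.mp hx
          apply hroot
          have hgr : gC.eval r = 0 := (mem_roots hgCne).mp hr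
          have : Polynomial.aeval r P = (f.map φ).eval r * gC.eval r := by
            rw [hgC, ← eval_mul, ← Polynomial.map_mul, ← hfg]
            rw [aeval_def, eval_map]
            rfl
          rw [this, hgr, mul_zero]
      have hfin : (d:ℝ) < ‖gC.eval 0‖ := by
        rw [habs0]
        nlinarith
      rw [hev0, Complex.norm_intCast] at hfin
      have : |(g.coeff 0 : ℝ)| ≤ (d:ℝ) := by exact_mod_cast hg0le
      linarith
    -- from primitivity
    have hgc : g = C (g.coeff 0) := (Polynomial.eq_C_of_natDegree_eq_zero hgdeg)
    have hfg' : P = f * C (g.coeff 0) := by rw [← hgc]; exact hfg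
    have : IsUnit (g.coeff 0) := hprim (g.coeff 0) ⟨f, by rw [hfg']; ring⟩
    rw [hgc]; exact this.map C
  constructor
  · intro hu
    have := natDegree_eq_zero_of_isUnit hu
    omega
  · intro f g hfg
    by_cases hpg : (p:ℤ) ∣ g.coeff 0
    · left
      apply key g f (by rw [hfg]; ring)
      intro hpf
      apply hpd
      have hc0' : f.coeff 0 * g.coeff 0 = ε * (p:ℤ) * d := by
        rw [← hc0, hfg, mul_coeff_zero]
      obtain ⟨x, hx⟩ := hpf
      obtain ⟨y, hy⟩ := hpg
      have : (p:ℤ) * ((p:ℤ) * (x*y)) = (p:ℤ) * (ε * d) := by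
        rw [← mul_assoc]
        calc (p:ℤ) * (p:ℤ) * (x*y) = ((p:ℤ)*x) * ((p:ℤ)*y) := by ring
          _ = ε * (p:ℤ) * d := by rw [← hx, ← hy]; exact hc0'
          _ = (p:ℤ) * (ε * d) := by ring
      have hed : (p:ℤ) * (x*y) = ε * d := mul_left_cancel₀ (ne_of_gt hp0) this
      rcases hε with h | h
      · rw [h, one_mul] at hed; exact ⟨x*y, hed.symm⟩
      · rw [h] at hed; exact ⟨-(x*y), by linarith [hed]⟩
    · right
      exact key f g hfg hpg
end

section
/- Let f, g, h ∈ ℤ[z] be nonconstant with f = g·h, f = a_0 + a_1 z + ... + a_m z^m, g having constant term b_0 and h constant term c_0. Suppose there exist a prime p and positive integers k ≥ 2 and j with 1 ≤ j ≤ m such that p^k divides gcd(a_0, a_1, ..., a_{j-1}), p^{k+1} does not divide a_0, and gcd(k, j) = 1. If p divides b_0 and p divides c_0, then p divides a_j. -/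
open Polynomial Finset

/-- Auxiliary: a nonempty finite set of naturals has an element minimizing `w`
which is least among minimizers. -/
lemma stmt17_aux_min (s : Finset ℕ) (hs : s.Nonempty) (w : ℕ → ℕ) :
    ∃ u ∈ s, (∀ u' ∈ s, w u ≤ w u') ∧ (∀ u' ∈ s, u' < u → w u < w u') := by
  classical
  set W := s.inf' hs w with hW
  have hex : ∃ u, u ∈ s ∧ w u = W := by
    obtain ⟨i, hi, hieq⟩ := Finset.exists_mem_eq_inf' hs w
    exact ⟨i, hi, hieq.symm⟩
  obtain ⟨hmem, heq⟩ := Nat.find_spec hex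
  refine ⟨Nat.find hex, hmem, ?_, ?_⟩
  · intro u' hu'
    rw [heq]
    exact Finset.inf'_le w hu'
  · intro u' hu' hlt
    have h1 : W ≤ w u' := Finset.inf'_le w hu'
    have h2 := Nat.find_min hex hlt
    rw [heq]
    rcases lt_or_eq_of_le h1 with hh | hh
    · exact hh
    · exact absurd ⟨hu', hh.symm⟩ h2

/-- Lemma A (Singh–Kumar): if `p` divides both constant terms of the factors,
then `p` divides `a j`. -/
theorem stmt17 (m : ℕ) (a : ℕ → ℤ) (f g h : ℤ[X])
    (hf : f = ∑ i ∈ range (m + 1), C (a i) * X ^ i)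
    (hgnc : 0 < g.natDegree) (hhnc : 0 < h.natDegree)
    (hfac : f = g * h)
    (p : ℕ) (hp : p.Prime) (k j : ℕ) (hk : 2 ≤ k) (hj1 : 1 ≤ j) (hjm : j ≤ m)
    (hdvd : ∀ i < j, (p : ℤ) ^ k ∣ a i)
    (hndvd0 : ¬ (p : ℤ) ^ (k + 1) ∣ a 0)
    (hcop : Nat.Coprime k j)
    (hb0 : (p : ℤ) ∣ g.coeff 0) (hc0 : (p : ℤ) ∣ h.coeff 0) :
    (p : ℤ) ∣ a j := by
  classical
  set v : ℤ → ℕ := fun x => x.natAbs.factorization p with hv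
  have hvd : ∀ (x : ℤ), x ≠ 0 → ∀ n : ℕ, ((p:ℤ)^n ∣ x ↔ n ≤ v x) := by
    intro x hx n
    rw [← Int.natAbs_dvd_natAbs, Int.natAbs_pow, Int.natAbs_natCast]
    exact hp.pow_dvd_iff_le_factorization (Int.natAbs_ne_zero.mpr hx)
  have hvmul : ∀ (x y : ℤ), x ≠ 0 → y ≠ 0 → v (x*y) = v x + v y := by
    intro x y hx hy
    simp only [hv, Int.natAbs_mul]
    rw [Nat.factorization_mul (Int.natAbs_ne_zero.mpr hx) (Int.natAbs_ne_zero.mpr hy)]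
    simp
  -- coefficients of f
  have hcoeff : ∀ t, f.coeff t = if t ≤ m then a t else 0 := by
    intro t
    rw [hf, finset_sum_coeff]
    simp only [coeff_C_mul, coeff_X_pow, mul_ite, mul_one, mul_zero]
    rw [Finset.sum_ite_eq (range (m+1)) t (fun i => a i)]
    simp [Nat.lt_succ_iff]
  have ha0 : a 0 ≠ 0 := by
    intro h0; exact hndvd0 (h0 ▸ dvd_zero _)
  have hbc0 : g.coeff 0 * h.coeff 0 = a 0 := by
    have := hcoeff 0
    rw [hfac, mul_coeff_zero] at this
    simpa using this
  have hbne : g.coeff 0 ≠ 0 := fun h0 => ha0 (by rw [← hbc0, h0, zero_mul])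
  have hcne : h.coeff 0 ≠ 0 := fun h0 => ha0 (by rw [← hbc0, h0, mul_zero])
  have hgne : g ≠ 0 := fun h0 => hbne (by simp [h0])
  have hhne : h ≠ 0 := fun h0 => hcne (by simp [h0])
  have hαβ : v (g.coeff 0) + v (h.coeff 0) = k := by
    have h1 : k ≤ v (a 0) := (hvd _ ha0 k).mp (hdvd 0 hj1)
    have h2 : ¬ (k+1 ≤ v (a 0)) := fun hh => hndvd0 ((hvd _ ha0 (k+1)).mpr hh)
    have h3 : v (a 0) = v (g.coeff 0) + v (h.coeff 0) := by
      rw [← hbc0, hvmul _ _ hbne hcne]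
    omega
  have hα1 : 1 ≤ v (g.coeff 0) := by
    have := (hvd _ hbne 1).mp (by simpa using hb0)
    omega
  have hβ1 : 1 ≤ v (h.coeff 0) := by
    have := (hvd _ hcne 1).mp (by simpa using hc0)
    omega
  -- weight functions
  set wg : ℕ → ℕ := fun u => j * v (g.coeff u) + k * u with hwg
  set wh : ℕ → ℕ := fun u => j * v (h.coeff u) + k * u with hwh
  have hgsupp : g.support.Nonempty := nonempty_support_iff.mpr hgne
  have hhsupp : h.support.Nonempty := nonempty_support_iff.mpr hhne
  obtain ⟨u0, hu0mem, hu0le, hu0min⟩ := stmt17_aux_min g.support hgsupp wg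
  obtain ⟨l0, hl0mem, hl0le, hl0min⟩ := stmt17_aux_min h.support hhsupp wh
  have hbu0 : g.coeff u0 ≠ 0 := mem_support_iff.mp hu0mem
  have hcl0 : h.coeff l0 ≠ 0 := mem_support_iff.mp hl0mem
  have hWgle : wg u0 ≤ j * v (g.coeff 0) := by
    have h1 := hu0le 0 (mem_support_iff.mpr hbne)
    have h2 : wg 0 = j * v (g.coeff 0) := by simp [hwg]
    omega
  have hWhle : wh l0 ≤ j * v (h.coeff 0) := by
    have h1 := hl0le 0 (mem_support_iff.mpr hcne)
    have h2 : wh 0 = j * v (h.coeff 0) := by simp [hwh]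
    omega
  -- remaining terms of coefficient t = u0 + l0 are divisible by p^(d+1)
  have hrest : ∀ q ∈ (Finset.HasAntidiagonal.antidiagonal (u0 + l0)).erase (u0, l0),
      (p:ℤ)^(v (g.coeff u0) + v (h.coeff l0) + 1) ∣ g.coeff q.1 * h.coeff q.2 := by
    rintro ⟨u, l⟩ hq
    rw [Finset.mem_erase, Finset.HasAntidiagonal.mem_antidiagonal] at hq
    obtain ⟨hne, hul⟩ := hq
    by_cases hb : g.coeff u = 0
    · rw [hb, zero_mul]; exact dvd_zero _
    by_cases hc : h.coeff l = 0
    · rw [hc, mul_zero]; exact dvd_zero _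
    have hmulne : g.coeff u * h.coeff l ≠ 0 := mul_ne_zero hb hc
    rw [hvd _ hmulne, hvmul _ _ hb hc]
    have hune : u ≠ u0 ∨ l ≠ l0 := by
      by_contra hcon
      push_neg at hcon
      exact hne (by rw [hcon.1, hcon.2])
    have hstrict : wg u0 + wh l0 < wg u + wh l := by
      have hg1 : wg u0 ≤ wg u := hu0le u (mem_support_iff.mpr hb)
      have hh1 : wh l0 ≤ wh l := hl0le l (mem_support_iff.mpr hc)
      rcases Nat.lt_or_ge u u0 with hlt | hge
      · have := hu0min u (mem_support_iff.mpr hb) hlt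
        omega
      · have hlt : l < l0 := by
          rcases Nat.eq_or_lt_of_le hge with heq | hlt'
          · exfalso
            rcases hune with h1 | h2
            · exact h1 heq.symm
            · exact h2 (by omega)
          · omega
        have := hl0min l (mem_support_iff.mpr hc) hlt
        omega
    have hsum : j * (v (g.coeff u) + v (h.coeff l)) + k * (u0 + l0) = wg u + wh l := by
      simp only [hwg, hwh]
      have hkk : k * u + k * l = k * (u0 + l0) := by rw [← Nat.mul_add, hul]
      rw [Nat.mul_add j]
      omega
    have hwsum : wg u0 + wh l0 =
        j * (v (g.coeff u0) + v (h.coeff l0)) + k * (u0 + l0) := by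
      simp only [hwg, hwh]
      rw [Nat.mul_add j, Nat.mul_add k]
      ring
    have hgt : j * (v (g.coeff u0) + v (h.coeff l0)) <
        j * (v (g.coeff u) + v (h.coeff l)) := by omega
    have := Nat.lt_of_mul_lt_mul_left hgt
    omega
  -- the special term is not divisible by p^(d+1)
  have hmulne0 : g.coeff u0 * h.coeff l0 ≠ 0 := mul_ne_zero hbu0 hcl0
  have hterm : ¬ (p:ℤ)^(v (g.coeff u0) + v (h.coeff l0) + 1) ∣ g.coeff u0 * h.coeff l0 := by
    rw [hvd _ hmulne0, hvmul _ _ hbu0 hcl0]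
    omega
  have hsplit : f.coeff (u0 + l0) = g.coeff u0 * h.coeff l0 +
      ∑ q ∈ (Finset.HasAntidiagonal.antidiagonal (u0 + l0)).erase (u0, l0), g.coeff q.1 * h.coeff q.2 := by
    rw [hfac, coeff_mul]
    have hmem : ((u0, l0) : ℕ × ℕ) ∈ Finset.HasAntidiagonal.antidiagonal (u0 + l0) :=
      Finset.HasAntidiagonal.mem_antidiagonal.mpr rfl
    exact (Finset.add_sum_erase _ (fun q => g.coeff q.1 * h.coeff q.2) hmem).symm
  have hftndvd : ¬ (p:ℤ)^(v (g.coeff u0) + v (h.coeff l0) + 1) ∣ f.coeff (u0 + l0) := by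
    intro hdd
    apply hterm
    have hrd := Finset.dvd_sum hrest
    have heq2 : g.coeff u0 * h.coeff l0 = f.coeff (u0 + l0) -
        ∑ q ∈ (Finset.HasAntidiagonal.antidiagonal (u0 + l0)).erase (u0, l0), g.coeff q.1 * h.coeff q.2 := by
      rw [hsplit]; ring
    rw [heq2]
    exact dvd_sub hdd hrd
  have hftne : f.coeff (u0 + l0) ≠ 0 := fun h0 => hftndvd (h0 ▸ dvd_zero _)
  have hvft : v (f.coeff (u0 + l0)) ≤ v (g.coeff u0) + v (h.coeff l0) := by
    by_contra hcon
    exact hftndvd ((hvd _ hftne _).mpr (by omega))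
  -- t ≤ m
  have hfdeg : f.natDegree ≤ m := by
    apply natDegree_le_iff_coeff_eq_zero.mpr
    intro N hN
    rw [hcoeff N, if_neg (by omega)]
  have htm : u0 + l0 ≤ m := by
    have h1 : u0 ≤ g.natDegree := le_natDegree_of_ne_zero hbu0
    have h2 : l0 ≤ h.natDegree := le_natDegree_of_ne_zero hcl0
    have h3 : f.natDegree = g.natDegree + h.natDegree := by
      rw [hfac]; exact natDegree_mul hgne hhne
    omega
  -- lower bound: j*k ≤ j * v (f.coeff t) + k * t
  have hlower : j * k ≤ j * v (f.coeff (u0 + l0)) + k * (u0 + l0) := by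
    rcases Nat.lt_or_ge (u0 + l0) j with hlt | hge
    · have hat : f.coeff (u0 + l0) = a (u0 + l0) := by rw [hcoeff, if_pos htm]
      have hdv : k ≤ v (f.coeff (u0 + l0)) := by
        rw [hat]
        exact (hvd _ (hat ▸ hftne) k).mp (hdvd _ hlt)
      calc j * k ≤ j * v (f.coeff (u0 + l0)) := Nat.mul_le_mul_left j hdv
        _ ≤ _ := Nat.le_add_right _ _
    · calc j * k = k * j := Nat.mul_comm j k
        _ ≤ k * (u0 + l0) := Nat.mul_le_mul_left k hge
        _ ≤ _ := Nat.le_add_left _ _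
  have hub : j * v (f.coeff (u0 + l0)) + k * (u0 + l0) ≤ wg u0 + wh l0 := by
    have h1 : j * v (f.coeff (u0+l0)) ≤ j * (v (g.coeff u0) + v (h.coeff l0)) :=
      Nat.mul_le_mul_left j hvft
    have h2 : wg u0 + wh l0 =
        j * (v (g.coeff u0) + v (h.coeff l0)) + k * (u0 + l0) := by
      simp only [hwg, hwh]
      rw [Nat.mul_add j, Nat.mul_add k]
      ring
    omega
  have hcomb : j * v (g.coeff 0) + j * v (h.coeff 0) = j * k := by
    rw [← Nat.mul_add, hαβ]
  have hWgeq : wg u0 = j * v (g.coeff 0) := by omega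
  have hWheq : wh l0 = j * v (h.coeff 0) := by omega
  -- key valuation bounds
  have keyg : ∀ u, g.coeff u ≠ 0 →
      j * v (g.coeff 0) ≤ j * v (g.coeff u) + k * u := by
    intro u hu
    have h1 := hu0le u (mem_support_iff.mpr hu)
    have h2 : wg u = j * v (g.coeff u) + k * u := by simp [hwg]
    omega
  have keyh : ∀ u, h.coeff u ≠ 0 →
      j * v (h.coeff 0) ≤ j * v (h.coeff u) + k * u := by
    intro u hu
    have h1 := hl0le u (mem_support_iff.mpr hu)
    have h2 : wh u = j * v (h.coeff u) + k * u := by simp [hwh]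
    omega
  -- conclude
  have haj : a j = f.coeff j := by rw [hcoeff j, if_pos hjm]
  rw [haj, hfac, coeff_mul]
  apply Finset.dvd_sum
  rintro ⟨u, l⟩ hq
  rw [Finset.HasAntidiagonal.mem_antidiagonal] at hq
  by_cases hu0' : u = 0
  · subst hu0'
    exact Dvd.dvd.mul_right hb0 _
  by_cases hl0' : l = 0
  · subst hl0'
    exact Dvd.dvd.mul_left hc0 _
  by_cases hb : g.coeff u = 0
  · rw [hb, zero_mul]; exact dvd_zero _
  by_cases hc : h.coeff l = 0
  · rw [hc, mul_zero]; exact dvd_zero _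
  have hmne : g.coeff u * h.coeff l ≠ 0 := mul_ne_zero hb hc
  have h1 := keyg u hb
  have h2 := keyh l hc
  have hgoal : 1 ≤ v (g.coeff u * h.coeff l) := by
    rw [hvmul _ _ hb hc]
    by_contra hcon
    push_neg at hcon
    have hv1 : v (g.coeff u) = 0 := by omega
    have hv2 : v (h.coeff l) = 0 := by omega
    rw [hv1] at h1
    rw [hv2] at h2
    simp only [Nat.mul_zero, Nat.zero_add] at h1 h2
    have hsum : k * u + k * l = j * v (g.coeff 0) + j * v (h.coeff 0) := by
      rw [← Nat.mul_add, hq, hcomb, Nat.mul_comm]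
    have heq1 : k * u = j * v (g.coeff 0) := by omega
    have hjdvd : j ∣ u := by
      have hd : j ∣ k * u := ⟨v (g.coeff 0), heq1⟩
      exact (hcop.symm).dvd_of_dvd_mul_left hd
    have : j ≤ u := Nat.le_of_dvd (by omega) hjdvd
    omega
  have := (hvd _ hmne 1).mpr hgoal
  simpa using this
end
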